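/- arXiv:1005.4838 — 4 statements merged into one kernel-verified Lean document; each statement's English description precedes it below -/
import Mathlib

section
/- For every λ with 0 < λ ≤ 1, the function z ↦ E(z,λ) attains its infimum over ℝ at some point ζ(λ) > 0; that is, there exists ζ > 0 such that E(ζ,λ) ≤ E(z,λ) for all z ∈ ℝ. -/
open MeasureTheory Set Real Filter

noncomputable section

/-- Membership in the space `B¹(ℝ⁺)`: square integrable on `(0,∞)`, with square
integrable derivative and such that `t ↦ t·φ(t)` is square integrable. -/
def MemB1 (φ : ℝ → ℝ) : Prop :=
  ContinuousWithinAt φ (Ici 0) 0 ∧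
  (∀ t ∈ Ioi (0:ℝ), DifferentiableAt ℝ φ t) ∧
  IntegrableOn (fun t => (φ t) ^ 2) (Ioi 0) ∧
  IntegrableOn (fun t => (deriv φ t) ^ 2) (Ioi 0) ∧
  IntegrableOn (fun t => (t * φ t) ^ 2) (Ioi 0)

/-- The Rayleigh quotient of the de Gennes operator `-d²/dt² + (t-ξ)²`
(Neumann realization on `L²((0,∞))`). -/
def RQ (ξ : ℝ) (φ : ℝ → ℝ) : ℝ :=
  (∫ t in Ioi (0:ℝ), ((deriv φ t) ^ 2 + (t - ξ) ^ 2 * (φ t) ^ 2)) /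
  (∫ t in Ioi (0:ℝ), (φ t) ^ 2)

/-- The ground state energy `μ₁(ξ)` of the de Gennes operator. -/
def mu1 (ξ : ℝ) : ℝ :=
  sInf {r | ∃ φ, MemB1 φ ∧ (0 < ∫ t in Ioi (0:ℝ), (φ t) ^ 2) ∧ r = RQ ξ φ}

/-- `Θ₀ = inf_ξ μ₁(ξ)`. -/
def Theta0 : ℝ := sInf (Set.range mu1)

/-- The Ginzburg–Landau type functional `F_{z,λ}`. -/
def GLF (z lam : ℝ) (φ : ℝ → ℝ) : ℝ :=
  ∫ t in Ioi (0:ℝ),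
    ((deriv φ t) ^ 2 + (t - z) ^ 2 * (φ t) ^ 2 + lam / 2 * (φ t) ^ 4 - lam * (φ t) ^ 2)

/-- `f` minimizes `F_{z,λ}` over `B¹(ℝ⁺)`. -/
def IsMinimizer (z lam : ℝ) (f : ℝ → ℝ) : Prop :=
  MemB1 f ∧ ∀ φ, MemB1 φ → GLF z lam f ≤ GLF z lam φ

/-- The ground state energy `E(z,λ) = inf F_{z,λ}` over `B¹(ℝ⁺)`. -/
def Einf (lam z : ℝ) : ℝ := sInf {r | ∃ φ, MemB1 φ ∧ r = GLF z lam φ}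

open Topology

set_option maxHeartbeats 1000000
namespace ZA

def gI (z lam : ℝ) (φ : ℝ → ℝ) : ℝ → ℝ := fun t =>
  (deriv φ t) ^ 2 + (t - z) ^ 2 * (φ t) ^ 2 + lam / 2 * (φ t) ^ 4 - lam * (φ t) ^ 2

lemma glf_eq (z lam : ℝ) (φ : ℝ → ℝ) : GLF z lam φ = ∫ t in Ioi (0:ℝ), gI z lam φ t := rfl

variable {φ : ℝ → ℝ} {z lam : ℝ}

lemma contOn (h : MemB1 φ) : ContinuousOn φ (Ioi 0) := fun t ht =>
  (h.2.1 t ht).continuousAt.continuousWithinAt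

lemma aesm (h : MemB1 φ) : AEStronglyMeasurable φ (volume.restrict (Ioi 0)) :=
  (contOn h).aestronglyMeasurable measurableSet_Ioi

lemma aesm_deriv : AEStronglyMeasurable (deriv φ) (volume.restrict (Ioi 0)) :=
  (measurable_deriv φ).aestronglyMeasurable

lemma int_pot (h : MemB1 φ) (z : ℝ) :
    IntegrableOn (fun t => (t - z) ^ 2 * (φ t) ^ 2) (Ioi 0) := by
  have hg : IntegrableOn (fun t => 2 * (t * φ t) ^ 2 + (2 * z ^ 2) * (φ t) ^ 2) (Ioi 0) :=
    (h.2.2.2.2.const_mul 2).add (h.2.2.1.const_mul (2 * z ^ 2))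
  have hc : Continuous (fun t : ℝ => (t - z) ^ 2) := by continuity
  have hm : AEStronglyMeasurable (fun t => (t - z) ^ 2 * (φ t) ^ 2) (volume.restrict (Ioi 0)) :=
    (hc.continuousOn.mul ((contOn h).pow 2)).aestronglyMeasurable measurableSet_Ioi
  refine Integrable.mono' hg hm ?_
  filter_upwards with t
  have : |(t - z) ^ 2 * φ t ^ 2| = (t - z) ^ 2 * φ t ^ 2 := abs_of_nonneg (by positivity)
  rw [Real.norm_eq_abs, this]
  nlinarith [sq_nonneg (φ t), sq_nonneg (t + z), sq_nonneg (t*φ t), sq_nonneg (z * φ t)]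

lemma int_tphi2 (h : MemB1 φ) :
    IntegrableOn (fun t => t * (φ t) ^ 2) (Ioi 0) := by
  have hg : IntegrableOn (fun t => ((t * φ t) ^ 2 + (φ t) ^ 2) / 2) (Ioi 0) :=
    (h.2.2.2.2.add h.2.2.1).div_const 2
  have hm : AEStronglyMeasurable (fun t => t * (φ t) ^ 2) (volume.restrict (Ioi 0)) :=
    (continuous_id.continuousOn.mul ((contOn h).pow 2)).aestronglyMeasurable measurableSet_Ioi
  refine Integrable.mono' hg hm ?_
  filter_upwards with t
  rw [Real.norm_eq_abs]
  rcases abs_cases (t * φ t ^ 2) with ⟨he, _⟩ | ⟨he, _⟩ <;> rw [he] <;>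
    nlinarith [sq_nonneg (t * φ t - φ t), sq_nonneg (t * φ t + φ t)]


lemma memB1_zero : MemB1 (fun _ => (0:ℝ)) := by
  refine ⟨continuousWithinAt_const, fun t _ => differentiableAt_const 0, ?_, ?_, ?_⟩ <;>
    simp [integrableOn_zero, deriv_const']

lemma glf_zero (z lam : ℝ) : GLF z lam (fun _ => (0:ℝ)) = 0 := by
  rw [glf_eq]
  have : ∀ t, gI z lam (fun _ => (0:ℝ)) t = 0 := by
    intro t; simp [gI, deriv_const']
  simp only [this, integral_zero]

/-- the window set -/
def win (z lam : ℝ) : Set ℝ := Ioo (z - Real.sqrt (3*lam)) (z + Real.sqrt (3*lam))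

def bnd (z lam : ℝ) : ℝ → ℝ := (win z lam).indicator (fun _ => 9 * lam / 8)

lemma bnd_integrable (z : ℝ) (hl : 0 < lam) : IntegrableOn (bnd z lam) (Ioi 0) := by
  have : Integrable (bnd z lam) volume := by
    refine (integrableOn_const ?_).integrable_indicator measurableSet_Ioo
    exact measure_Ioo_lt_top.ne
  exact this.integrableOn

lemma sqrt3lam_le (hl1 : lam ≤ 1) : Real.sqrt (3 * lam) ≤ 16/9 := by
  have h1 : Real.sqrt (3 * lam) ≤ Real.sqrt 3 := by
    apply Real.sqrt_le_sqrt; nlinarith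
  have h2 : Real.sqrt 3 ≤ 16/9 := by
    rw [show (16:ℝ)/9 = Real.sqrt ((16/9)^2) by rw [Real.sqrt_sq (by norm_num)]]
    apply Real.sqrt_le_sqrt; norm_num
  linarith

lemma bnd_integral_le (z : ℝ) (hl0 : 0 < lam) (hl1 : lam ≤ 1) :
    ∫ t in Ioi (0:ℝ), bnd z lam t ≤ 5 := by
  have hmeas : MeasurableSet (win z lam) := measurableSet_Ioo
  unfold bnd
  rw [setIntegral_indicator hmeas, setIntegral_const, smul_eq_mul]
  have hle : (volume.restrict (win z lam)) (Ioi 0) ≤ volume (win z lam) := by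
    rw [Measure.restrict_apply' hmeas]
    exact measure_mono inter_subset_right
  have hvol : volume (win z lam) = ENNReal.ofReal (2 * Real.sqrt (3*lam)) := by
    rw [win, Real.volume_Ioo]; ring_nf
  have htr : (volume (Ioi 0 ∩ win z lam)).toReal ≤ 2 * Real.sqrt (3*lam) := by
    have h1 : volume (Ioi 0 ∩ win z lam) ≤ volume (win z lam) := measure_mono inter_subset_right
    have := ENNReal.toReal_mono (by rw [hvol]; exact ENNReal.ofReal_ne_top) h1
    rwa [hvol, ENNReal.toReal_ofReal (by positivity)] at this
  have hsq := sqrt3lam_le (lam := lam) hl1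
  have hs0 : 0 ≤ Real.sqrt (3*lam) := Real.sqrt_nonneg _
  have h9 : (0:ℝ) ≤ 9 * lam / 8 := by positivity
  calc (volume (Ioi 0 ∩ win z lam)).toReal * (9 * lam / 8)
      ≤ (2 * Real.sqrt (3*lam)) * (9 * lam / 8) := mul_le_mul_of_nonneg_right htr h9
    _ ≤ 5 := by nlinarith


lemma ptwise (hl0 : 0 < lam) (t : ℝ) :
    lam/2 * (φ t)^2 + (1/2) * ((t - z)^2 * (φ t)^2) - bnd z lam t ≤ gI z lam φ t := by
  unfold gI bnd
  by_cases ht : t ∈ win z lam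
  · rw [indicator_of_mem ht]
    nlinarith [sq_nonneg (deriv φ t), sq_nonneg (φ t), sq_nonneg (t - z),
      mul_nonneg (sq_nonneg (t - z)) (sq_nonneg (φ t)),
      mul_nonneg hl0.le (sq_nonneg ((φ t)^2 - 3/2))]
  · rw [indicator_of_notMem ht]
    have hs : 3 * lam ≤ (t - z)^2 := by
      rw [win, mem_Ioo, not_and_or] at ht
      have h3 : Real.sqrt (3*lam) ^ 2 = 3 * lam := Real.sq_sqrt (by positivity)
      rcases ht with ht | ht <;> push_neg at ht <;> nlinarith [Real.sqrt_nonneg (3*lam)]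
    nlinarith [sq_nonneg (deriv φ t), sq_nonneg (φ t),
      mul_nonneg (mul_nonneg hl0.le (sq_nonneg (φ t))) (sq_nonneg (φ t)),
      mul_nonneg (sub_nonneg.2 hs) (sq_nonneg (φ t))]

lemma key_bounds (h : MemB1 φ) (hl0 : 0 < lam) (hl1 : lam ≤ 1)
    (hi : IntegrableOn (gI z lam φ) (Ioi 0)) :
    lam/2 * (∫ t in Ioi (0:ℝ), (φ t)^2) + (1/2) * (∫ t in Ioi (0:ℝ), (t - z)^2 * (φ t)^2)
      ≤ GLF z lam φ + 5 := by
  have h2 := h.2.2.1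
  have hw := int_pot h z
  have hbi := bnd_integrable (lam := lam) z hl0
  have hf1 : IntegrableOn (fun t => lam/2 * (φ t)^2) (Ioi 0) := h2.const_mul (lam/2)
  have hf2 : IntegrableOn (fun t => (1/2) * ((t - z)^2 * (φ t)^2)) (Ioi 0) := hw.const_mul (1/2)
  have hf12 : IntegrableOn (fun t => lam/2 * (φ t)^2 + (1/2) * ((t - z)^2 * (φ t)^2)) (Ioi 0) :=
    hf1.add hf2
  have hf : IntegrableOn
      (fun t => lam/2 * (φ t)^2 + (1/2) * ((t - z)^2 * (φ t)^2) - bnd z lam t) (Ioi 0) :=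
    hf12.sub hbi
  have hmono : ∫ t in Ioi (0:ℝ),
      (lam/2 * (φ t)^2 + (1/2) * ((t - z)^2 * (φ t)^2) - bnd z lam t)
      ≤ ∫ t in Ioi (0:ℝ), gI z lam φ t :=
    setIntegral_mono_on hf hi measurableSet_Ioi (fun t _ => ptwise hl0 t)
  rw [integral_sub hf12 hbi, integral_add hf1 hf2,
    integral_const_mul, integral_const_mul] at hmono
  have hbnd := bnd_integral_le (lam := lam) z hl0 hl1
  rw [glf_eq]
  linarith

lemma sq_int_nonneg (z : ℝ) : (0:ℝ) ≤ ∫ t in Ioi (0:ℝ), (t - z)^2 * (φ t)^2 :=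
  setIntegral_nonneg measurableSet_Ioi (fun t _ => by positivity)

lemma phisq_int_nonneg : (0:ℝ) ≤ ∫ t in Ioi (0:ℝ), (φ t)^2 :=
  setIntegral_nonneg measurableSet_Ioi (fun t _ => by positivity)

lemma glf_ge_neg5 (h : MemB1 φ) (hl0 : 0 < lam) (hl1 : lam ≤ 1) :
    -5 ≤ GLF z lam φ := by
  by_cases hi : IntegrableOn (gI z lam φ) (Ioi 0)
  · have := key_bounds h hl0 hl1 hi
    have ha := phisq_int_nonneg (φ := φ)
    have hw := sq_int_nonneg (φ := φ) z
    nlinarith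
  · rw [glf_eq, integral_undef hi]; norm_num

lemma einf_mem_zero (z lam : ℝ) : (0:ℝ) ∈ {r | ∃ φ, MemB1 φ ∧ r = GLF z lam φ} :=
  ⟨fun _ => 0, memB1_zero, (glf_zero z lam).symm⟩

lemma einf_bddBelow (z : ℝ) (hl0 : 0 < lam) (hl1 : lam ≤ 1) :
    BddBelow {r | ∃ φ, MemB1 φ ∧ r = GLF z lam φ} :=
  ⟨-5, fun r ⟨ψ, hψ, hr⟩ => hr ▸ glf_ge_neg5 hψ hl0 hl1⟩

lemma einf_le_glf (hφ : MemB1 φ) (hl0 : 0 < lam) (hl1 : lam ≤ 1) (z : ℝ) :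
    Einf lam z ≤ GLF z lam φ :=
  csInf_le (einf_bddBelow z hl0 hl1) ⟨φ, hφ, rfl⟩

lemma einf_nonpos (hl0 : 0 < lam) (hl1 : lam ≤ 1) (z : ℝ) : Einf lam z ≤ 0 := by
  have := einf_le_glf memB1_zero hl0 hl1 z
  rwa [glf_zero] at this

lemma le_einf (z : ℝ) {C : ℝ} (h : ∀ ψ, MemB1 ψ → C ≤ GLF z lam ψ) : C ≤ Einf lam z :=
  le_csInf ⟨0, einf_mem_zero z lam⟩ (fun r ⟨ψ, hψ, hr⟩ => hr ▸ h ψ hψ)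

lemma exists_glf_lt {r : ℝ} (h : Einf lam z < r) : ∃ ψ, MemB1 ψ ∧ GLF z lam ψ < r := by
  obtain ⟨b, ⟨ψ, hψ, hb⟩, hbr⟩ := exists_lt_of_csInf_lt ⟨0, einf_mem_zero z lam⟩ h
  exact ⟨ψ, hψ, hb ▸ hbr⟩

lemma near_bounds (h : MemB1 φ) (hl0 : 0 < lam) (hl1 : lam ≤ 1)
    (hneg : GLF z lam φ < 0) :
    IntegrableOn (gI z lam φ) (Ioi 0) ∧ (∫ t in Ioi (0:ℝ), (φ t)^2) ≤ 10/lam ∧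
      (∫ t in Ioi (0:ℝ), (t - z)^2 * (φ t)^2) ≤ 10 := by
  have hi : IntegrableOn (gI z lam φ) (Ioi 0) := by
    by_contra hc
    rw [glf_eq, integral_undef hc] at hneg
    exact absurd hneg (lt_irrefl 0)
  have hk := key_bounds h hl0 hl1 hi
  have ha := phisq_int_nonneg (φ := φ)
  have hw := sq_int_nonneg (φ := φ) z
  refine ⟨hi, ?_, ?_⟩
  · rw [le_div_iff₀ hl0]; nlinarith
  · nlinarith


lemma tphi2_int_nonneg : (0:ℝ) ≤ ∫ t in Ioi (0:ℝ), t * (φ t)^2 :=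
  setIntegral_nonneg measurableSet_Ioi (fun t ht => by
    have : (0:ℝ) < t := ht; positivity)

lemma glf_shift (h : MemB1 φ) (hi : IntegrableOn (gI z lam φ) (Ioi 0)) (z' : ℝ) :
    GLF z' lam φ = GLF z lam φ +
      ((z - z') * 2 * (∫ t in Ioi (0:ℝ), t * (φ t)^2)
        - (z - z') * (z + z') * (∫ t in Ioi (0:ℝ), (φ t)^2)) := by
  have hd1 : IntegrableOn (fun t => (z - z') * 2 * (t * (φ t)^2)) (Ioi 0) :=
    (int_tphi2 h).const_mul _
  have hd2 : IntegrableOn (fun t => (z - z') * (z + z') * ((φ t)^2)) (Ioi 0) :=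
    h.2.2.1.const_mul _
  have hdiff : IntegrableOn
      (fun t => (z - z') * 2 * (t * (φ t)^2) - (z - z') * (z + z') * ((φ t)^2)) (Ioi 0) :=
    hd1.sub hd2
  have heq : (fun t => gI z' lam φ t) = fun t => gI z lam φ t +
      ((z - z') * 2 * (t * (φ t)^2) - (z - z') * (z + z') * ((φ t)^2)) := by
    funext t; unfold gI; ring
  rw [glf_eq, glf_eq, heq, integral_add hi hdiff, integral_sub hd1 hd2,
    integral_const_mul, integral_const_mul]

lemma c_bound (h : MemB1 φ) (hl0 : 0 < lam) (hl1 : lam ≤ 1)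
    (hneg : GLF z lam φ < 0) :
    (∫ t in Ioi (0:ℝ), t * (φ t)^2) ≤ 5 + (1/2 + |z|) * (10/lam) := by
  obtain ⟨hi, ha, hw⟩ := near_bounds h hl0 hl1 hneg
  have hgb : IntegrableOn
      (fun t => (1/2) * ((t - z)^2 * (φ t)^2) + (1/2 + |z|) * (φ t)^2) (Ioi 0) :=
    ((int_pot h z).const_mul _).add (h.2.2.1.const_mul _)
  have hmono : (∫ t in Ioi (0:ℝ), t * (φ t)^2) ≤
      ∫ t in Ioi (0:ℝ), ((1/2) * ((t - z)^2 * (φ t)^2) + (1/2 + |z|) * (φ t)^2) := by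
    refine setIntegral_mono_on (int_tphi2 h) hgb measurableSet_Ioi (fun t ht => ?_)
    have h1 : t ≤ (t - z)^2/2 + 1/2 + |z| := by
      nlinarith [sq_nonneg (t - z - 1), abs_nonneg z, le_abs_self z]
    nlinarith [sq_nonneg (φ t)]
  rw [integral_add ((int_pot h z).const_mul _) (h.2.2.1.const_mul _),
    integral_const_mul, integral_const_mul] at hmono
  have ha0 := phisq_int_nonneg (φ := φ)
  have habs : (0:ℝ) ≤ |z| := abs_nonneg z
  have h12 : (0:ℝ) < 1/2 + |z| := by linarith
  calc (∫ t in Ioi (0:ℝ), t * (φ t)^2)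
      ≤ 1/2 * (∫ t in Ioi (0:ℝ), (t-z)^2 * (φ t)^2) + (1/2 + |z|) * (∫ t in Ioi (0:ℝ), (φ t)^2) := hmono
    _ ≤ 1/2 * 10 + (1/2 + |z|) * (10/lam) := by
        have := mul_le_mul_of_nonneg_left ha h12.le
        nlinarith
    _ = 5 + (1/2 + |z|) * (10/lam) := by ring

/-- Lipschitz constant -/
def LC (lam R : ℝ) : ℝ := 2 * (5 + (1/2 + R) * (10/lam)) + 2 * R * (10/lam)

lemma LC_nonneg (hl0 : 0 < lam) {R : ℝ} (hR : 0 ≤ R) : 0 ≤ LC lam R := by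
  unfold LC; positivity

lemma einf_lip (hl0 : 0 < lam) (hl1 : lam ≤ 1) {R : ℝ} (hR : 0 < R)
    {z z' : ℝ} (hz : z ∈ Icc (-R) R) (hz' : z' ∈ Icc (-R) R) :
    Einf lam z' ≤ Einf lam z + LC lam R * |z' - z| := by
  refine le_of_forall_pos_le_add (fun ε hε => ?_)
  by_cases hc : 0 < Einf lam z + ε
  · have h0 := einf_nonpos hl0 hl1 z'
    have hL : 0 ≤ LC lam R * |z' - z| := mul_nonneg (LC_nonneg hl0 hR.le) (abs_nonneg _)
    linarith
  push_neg at hc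
  obtain ⟨φ, hφ, hlt⟩ := exists_glf_lt (z := z) (lam := lam) (by linarith : Einf lam z < Einf lam z + ε)
  have hneg : GLF z lam φ < 0 := lt_of_lt_of_le hlt hc
  obtain ⟨hi, ha, hw⟩ := near_bounds hφ hl0 hl1 hneg
  have hcb := c_bound hφ hl0 hl1 hneg
  have hc0 := tphi2_int_nonneg (φ := φ)
  have ha0 := phisq_int_nonneg (φ := φ)
  set a := ∫ t in Ioi (0:ℝ), (φ t)^2
  set c := ∫ t in Ioi (0:ℝ), t * (φ t)^2
  have hzR : |z| ≤ R := abs_le.2 ⟨hz.1, hz.2⟩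
  have hzR' : |z'| ≤ R := abs_le.2 ⟨hz'.1, hz'.2⟩
  have hshift := glf_shift hφ hi z'
  have hEle : Einf lam z' ≤ GLF z' lam φ := einf_le_glf hφ hl0 hl1 z'
  have hsum : |z + z'| ≤ 2 * R := by
    calc |z + z'| ≤ |z| + |z'| := abs_add_le _ _
      _ ≤ 2 * R := by linarith
  have hza : |(z + z') * a| ≤ 2 * R * a := by
    rw [abs_mul, abs_of_nonneg ha0]
    exact mul_le_mul_of_nonneg_right hsum ha0
  have habs : |2 * c - (z + z') * a| ≤ 2 * c + 2 * R * a := by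
    rw [sub_eq_add_neg]
    calc |2 * c + -((z + z') * a)| ≤ |2 * c| + |(-((z + z') * a))| := abs_add_le _ _
      _ = 2 * c + |(z + z') * a| := by rw [abs_neg, abs_of_nonneg (by linarith : (0:ℝ) ≤ 2 * c)]
      _ ≤ 2 * c + 2 * R * a := by linarith
  have h5 : 2 * c + 2 * R * a ≤ LC lam R := by
    unfold LC
    have hcc : c ≤ 5 + (1/2 + R) * (10/lam) := by
      refine le_trans hcb ?_
      have : (1/2 + |z|) * (10/lam) ≤ (1/2 + R) * (10/lam) :=
        mul_le_mul_of_nonneg_right (by linarith) (by positivity)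
      linarith
    nlinarith [hR.le, hl0.le]
  have hkey : (z - z') * 2 * c - (z - z') * (z + z') * a ≤ LC lam R * |z' - z| := by
    have e : (z - z') * 2 * c - (z - z') * (z + z') * a
        = (z - z') * (2 * c - (z + z') * a) := by ring
    calc (z - z') * 2 * c - (z - z') * (z + z') * a
        = (z - z') * (2 * c - (z + z') * a) := e
      _ ≤ |(z - z') * (2 * c - (z + z') * a)| := le_abs_self _
      _ = |z - z'| * |2 * c - (z + z') * a| := abs_mul _ _
      _ ≤ |z - z'| * LC lam R := mul_le_mul_of_nonneg_left (le_trans habs h5) (abs_nonneg _)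
      _ = LC lam R * |z' - z| := by rw [abs_sub_comm z z', mul_comm]
  calc Einf lam z' ≤ GLF z' lam φ := hEle
    _ = GLF z lam φ + ((z - z') * 2 * c - (z - z') * (z + z') * a) := hshift
    _ ≤ (Einf lam z + ε) + LC lam R * |z' - z| := by
        have := le_of_lt hlt
        linarith
    _ = Einf lam z + LC lam R * |z' - z| + ε := by ring

lemma einf_continuousOn (hl0 : 0 < lam) (hl1 : lam ≤ 1) {R : ℝ} (hR : 0 < R) :
    ContinuousOn (fun z => Einf lam z) (Icc (-R) R) := by
  refine LipschitzOnWith.continuousOn (K := Real.toNNReal (LC lam R)) ?_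
  refine LipschitzOnWith.of_dist_le_mul (fun x hx y hy => ?_)
  rw [Real.dist_eq, Real.dist_eq, Real.coe_toNNReal _ (LC_nonneg hl0 hR.le)]
  have h1 := einf_lip hl0 hl1 hR hx hy
  have h2 := einf_lip hl0 hl1 hR hy hx
  rw [abs_sub_comm y x] at h1
  rw [abs_le]
  constructor
  · linarith
  · linarith

/-- integrand of the derivative of `(t-z) φ(t)²` -/
def uD (z : ℝ) (φ : ℝ → ℝ) : ℝ → ℝ := fun t =>
  (φ t)^2 + 2 * (t - z) * (φ t) * (deriv φ t)

lemma cross_int (h : MemB1 φ) (z : ℝ) :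
    IntegrableOn (fun t => 2 * (t - z) * (φ t) * (deriv φ t)) (Ioi 0) := by
  have hg : IntegrableOn (fun t => (t - z)^2 * (φ t)^2 + (deriv φ t)^2) (Ioi 0) :=
    (int_pot h z).add h.2.2.2.1
  have hc : Continuous (fun t : ℝ => 2 * (t - z)) := by continuity
  have hm1 : AEStronglyMeasurable (fun t => 2 * (t - z) * (φ t)) (volume.restrict (Ioi 0)) :=
    (hc.continuousOn.mul (contOn h)).aestronglyMeasurable measurableSet_Ioi
  have hm : AEStronglyMeasurable (fun t => 2 * (t - z) * (φ t) * (deriv φ t))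
      (volume.restrict (Ioi 0)) :=
    hm1.mul (measurable_deriv φ).aestronglyMeasurable
  refine Integrable.mono' hg hm ?_
  filter_upwards with t
  rw [Real.norm_eq_abs]
  rcases abs_cases (2 * (t - z) * φ t * deriv φ t) with ⟨he, _⟩ | ⟨he, _⟩ <;> rw [he] <;>
    nlinarith [sq_nonneg ((t - z) * φ t - deriv φ t), sq_nonneg ((t - z) * φ t + deriv φ t)]

lemma uD_int (h : MemB1 φ) (z : ℝ) : IntegrableOn (uD z φ) (Ioi 0) :=
  h.2.2.1.add (cross_int h z)

lemma u_hasDeriv (h : MemB1 φ) (z : ℝ) {t : ℝ} (ht : t ∈ Ioi (0:ℝ)) :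
    HasDerivAt (fun t => (t - z) * (φ t)^2) (uD z φ t) t := by
  have hφ : HasDerivAt φ (deriv φ t) t := (h.2.1 t ht).hasDerivAt
  have h1 : HasDerivAt (fun t : ℝ => t - z) 1 t := (hasDerivAt_id t).sub_const z
  have h2 : HasDerivAt (fun t => (φ t)^2) (2 * (φ t) * (deriv φ t)) t := by
    have := hφ.pow 2
    exact this.congr_deriv (by norm_num)
  have := h1.mul h2
  exact this.congr_deriv (by unfold uD; ring)

/-- the primitive identity: for `0 < s ≤ T`, `u T - u s = ∫_s^T uD`. -/
lemma u_ftc (h : MemB1 φ) (z : ℝ) {s T : ℝ} (hs : 0 < s) (hsT : s ≤ T) :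
    ∫ t in s..T, uD z φ t = (T - z) * (φ T)^2 - (s - z) * (φ s)^2 := by
  refine intervalIntegral.integral_eq_sub_of_hasDerivAt (f := fun t => (t - z) * (φ t)^2)
    (fun x hx => ?_) ?_
  · rw [uIcc_of_le hsT] at hx
    exact u_hasDeriv h z (lt_of_lt_of_le hs hx.1)
  · have hsub : uIcc s T ⊆ Ioi 0 := by
      rw [uIcc_of_le hsT]
      exact fun x hx => lt_of_lt_of_le hs hx.1
    exact ((uD_int h z).mono_set hsub).intervalIntegrable

/-- `u` tends to `0` at infinity. -/
lemma u_lim (h : MemB1 φ) (z : ℝ) :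
    Tendsto (fun t => (t - z) * (φ t)^2) atTop (𝓝 0) := by
  set u : ℝ → ℝ := fun t => (t - z) * (φ t)^2 with hu
  set L : ℝ := u 1 + ∫ t in Ioi (1:ℝ), uD z φ t with hL
  have h1 : Tendsto (fun T => ∫ t in (1:ℝ)..T, uD z φ t) atTop
      (𝓝 (∫ t in Ioi (1:ℝ), uD z φ t)) :=
    intervalIntegral_tendsto_integral_Ioi 1 ((uD_int h z).mono_set (Ioi_subset_Ioi one_pos.le))
      tendsto_id
  have h2 : ∀ᶠ T in atTop, u 1 + ∫ t in (1:ℝ)..T, uD z φ t = u T := by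
    filter_upwards [eventually_ge_atTop (1:ℝ)] with T hT
    rw [u_ftc h z one_pos hT]; ring
  have hu_tend : Tendsto u atTop (𝓝 L) := by
    rw [hL]
    exact Tendsto.congr' h2 (tendsto_const_nhds.add h1)
  have hL0 : 0 ≤ L := by
    refine ge_of_tendsto hu_tend ?_
    filter_upwards [eventually_ge_atTop (z + 1)] with t ht
    have : 0 ≤ t - z := by linarith
    positivity
  have hLz : L = 0 := by
    by_contra hne
    have hLpos : 0 < L := lt_of_le_of_ne hL0 (Ne.symm hne)
    have hev : ∀ᶠ t in atTop, L/2 ≤ u t :=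
      hu_tend.eventually (eventually_ge_nhds (by linarith))
    obtain ⟨T₁, hT₁⟩ := hev.exists_forall_of_atTop
    set T₀ : ℝ := max T₁ (2 * |z| + 1) with hT₀def
    have hT₀pos : 0 < T₀ := lt_of_lt_of_le (by positivity) (le_max_right _ _)
    have hbd : ∀ t ∈ Ioi T₀, L * T₀ / 4 ≤ (t * φ t)^2 := by
      intro t ht
      rw [mem_Ioi] at ht
      have ht1 : T₁ ≤ t := le_trans (le_max_left _ _) ht.le
      have ht2 : 2 * |z| + 1 ≤ t := le_trans (le_max_right _ _) ht.le
      have hzle : |z| ≤ t := by nlinarith [abs_nonneg z]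
      have hz1 : z ≤ |z| := le_abs_self z
      have hz2 : -|z| ≤ z := neg_abs_le z
      have hu2 : L/2 ≤ (t - z) * (φ t)^2 := hT₁ t ht1
      have hx : (0:ℝ) ≤ (φ t)^2 := sq_nonneg _
      have htz : t - z ≤ 2 * t := by linarith
      have h4 : t * (φ t)^2 ≥ L/4 := by nlinarith
      have : (t * φ t)^2 = t * (t * (φ t)^2) := by ring
      rw [this]
      nlinarith [ht, hT₀pos]
    have hint : IntegrableOn (fun t => (t * φ t)^2) (Ioi T₀) :=
      h.2.2.2.2.mono_set (Ioi_subset_Ioi hT₀pos.le)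
    have hconst : IntegrableOn (fun _ : ℝ => L * T₀ / 4) (Ioi T₀) := by
      refine Integrable.mono' hint aestronglyMeasurable_const ?_
      rw [ae_restrict_iff' measurableSet_Ioi]
      filter_upwards with t ht
      rw [Real.norm_eq_abs, abs_of_nonneg (by positivity)]
      exact hbd t ht
    rw [integrableOn_const_iff] at hconst
    rcases hconst with hc | hc
    · have : (0:ℝ) < L * T₀ / 4 := by positivity
      rw [enorm_eq_zero.1 hc] at this; exact lt_irrefl 0 this
    · rw [Real.volume_Ioi] at hc
      exact lt_irrefl ⊤ hc
  rwa [hLz] at hu_tend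


lemma uD_integral_Ioi (h : MemB1 φ) (z : ℝ) {s : ℝ} (hs : 0 < s) :
    ∫ t in Ioi s, uD z φ t = -((s - z) * (φ s)^2) := by
  have h1 : Tendsto (fun T => ∫ t in s..T, uD z φ t) atTop
      (𝓝 (∫ t in Ioi s, uD z φ t)) :=
    intervalIntegral_tendsto_integral_Ioi s ((uD_int h z).mono_set (Ioi_subset_Ioi hs.le))
      tendsto_id
  have h2 : (fun T => ∫ t in s..T, uD z φ t) =ᶠ[atTop]
      (fun T => (T - z) * (φ T)^2 - (s - z) * (φ s)^2) := by
    filter_upwards [eventually_ge_atTop s] with T hT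
    exact u_ftc h z hs hT
  have h3 : Tendsto (fun T => (T - z) * (φ T)^2 - (s - z) * (φ s)^2) atTop
      (𝓝 (0 - (s - z) * (φ s)^2)) := (u_lim h z).sub_const _
  have := tendsto_nhds_unique (h1.congr' h2) h3
  rw [this]; ring

lemma uD_integral (h : MemB1 φ) (z : ℝ) :
    ∫ t in Ioi (0:ℝ), uD z φ t = z * (φ 0)^2 := by
  have hIcc : IntegrableOn (uD z φ) (Icc 0 1) := by
    rw [integrableOn_Icc_iff_integrableOn_Ioc]
    exact (uD_int h z).mono_set Ioc_subset_Ioi_self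
  have hFc := intervalIntegral.continuousOn_primitive (b := 1) hIcc
  have hF0 : (∫ t in Ioc (0:ℝ) 0, uD z φ t) = 0 := by
    rw [Ioc_self, Measure.restrict_empty, integral_zero_measure]
  have hFtend : Tendsto (fun x => ∫ t in Ioc (0:ℝ) x, uD z φ t) (𝓝[Icc (0:ℝ) 1] 0) (𝓝 0) := by
    have := (hFc 0 (by constructor <;> norm_num)).tendsto
    rwa [hF0] at this
  set sn : ℕ → ℝ := fun n => 1 / (n + 1) with hsn
  have hsn_pos : ∀ n, 0 < sn n := fun n => by positivity
  have hsn_le : ∀ n, sn n ≤ 1 := fun n => by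
    rw [hsn]; simp only []
    rw [div_le_one (by positivity)]
    norm_num
  have hsn_tend : Tendsto sn atTop (𝓝 0) := tendsto_one_div_add_atTop_nhds_zero_nat
  have hsn_tendIcc : Tendsto sn atTop (𝓝[Icc (0:ℝ) 1] 0) := by
    rw [tendsto_nhdsWithin_iff]
    exact ⟨hsn_tend, Eventually.of_forall (fun n => ⟨(hsn_pos n).le, hsn_le n⟩)⟩
  have hsn_tendIci : Tendsto sn atTop (𝓝[Ici (0:ℝ)] 0) := by
    rw [tendsto_nhdsWithin_iff]
    exact ⟨hsn_tend, Eventually.of_forall (fun n => (hsn_pos n).le)⟩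
  have ht1 : Tendsto (fun n => ∫ t in Ioc (0:ℝ) (sn n), uD z φ t) atTop (𝓝 0) :=
    hFtend.comp hsn_tendIcc
  have hφ0 : Tendsto (fun n => φ (sn n)) atTop (𝓝 (φ 0)) := h.1.tendsto.comp hsn_tendIci
  have ht2 : Tendsto (fun n => (sn n - z) * (φ (sn n))^2) atTop (𝓝 ((0 - z) * (φ 0)^2)) :=
    (hsn_tend.sub_const z).mul (hφ0.pow 2)
  have heq : ∀ n, ∫ t in Ioi (0:ℝ), uD z φ t
      = (∫ t in Ioc (0:ℝ) (sn n), uD z φ t) - ((sn n - z) * (φ (sn n))^2) := by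
    intro n
    have hsplit : ∫ t in Ioi (0:ℝ), uD z φ t
        = (∫ t in Ioc (0:ℝ) (sn n), uD z φ t) + ∫ t in Ioi (sn n), uD z φ t := by
      rw [← setIntegral_union (Ioc_disjoint_Ioi le_rfl) measurableSet_Ioi
        ((uD_int h z).mono_set Ioc_subset_Ioi_self)
        ((uD_int h z).mono_set (Ioi_subset_Ioi (hsn_pos n).le)),
        Ioc_union_Ioi_eq_Ioi (hsn_pos n).le]
    rw [hsplit, uD_integral_Ioi h z (hsn_pos n)]
    ring
  have hconst : Tendsto (fun _ : ℕ => ∫ t in Ioi (0:ℝ), uD z φ t) atTop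
      (𝓝 (∫ t in Ioi (0:ℝ), uD z φ t)) := tendsto_const_nhds
  have : Tendsto (fun n => (∫ t in Ioc (0:ℝ) (sn n), uD z φ t) - ((sn n - z) * (φ (sn n))^2))
      atTop (𝓝 (0 - (0 - z) * (φ 0)^2)) := ht1.sub ht2
  have hfin := tendsto_nhds_unique (hconst.congr (fun n => heq n)) this
  rw [hfin]; ring

/-- The half-line harmonic oscillator inequality. -/
lemma osc (h : MemB1 φ) (z : ℝ) (hb : z * (φ 0)^2 ≤ 0) :
    ∫ t in Ioi (0:ℝ), (φ t)^2
      ≤ (∫ t in Ioi (0:ℝ), (deriv φ t)^2) + ∫ t in Ioi (0:ℝ), (t - z)^2 * (φ t)^2 := by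
  have hsq : 0 ≤ ∫ t in Ioi (0:ℝ), (deriv φ t + (t - z) * φ t)^2 :=
    setIntegral_nonneg measurableSet_Ioi (fun t _ => sq_nonneg _)
  have hexp : (fun t => (deriv φ t + (t - z) * φ t)^2)
      = fun t => ((deriv φ t)^2 + (t - z)^2 * (φ t)^2) + 2 * (t - z) * (φ t) * (deriv φ t) := by
    funext t; ring
  have hkw : IntegrableOn (fun t => (deriv φ t)^2 + (t - z)^2 * (φ t)^2) (Ioi 0) :=
    h.2.2.2.1.add (int_pot h z)
  have hI : ∫ t in Ioi (0:ℝ), (deriv φ t + (t - z) * φ t)^2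
      = ((∫ t in Ioi (0:ℝ), (deriv φ t)^2) + ∫ t in Ioi (0:ℝ), (t - z)^2 * (φ t)^2)
        + ∫ t in Ioi (0:ℝ), 2 * (t - z) * (φ t) * (deriv φ t) := by
    rw [hexp, integral_add hkw (cross_int h z), integral_add h.2.2.2.1 (int_pot h z)]
  have hsplit : ∫ t in Ioi (0:ℝ), uD z φ t
      = (∫ t in Ioi (0:ℝ), (φ t)^2) + ∫ t in Ioi (0:ℝ), 2 * (t - z) * (φ t) * (deriv φ t) := by
    rw [show (fun t => uD z φ t) = fun t => (φ t)^2 + 2 * (t - z) * (φ t) * (deriv φ t) from rfl]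
    exact integral_add h.2.2.1 (cross_int h z)
  have hval := uD_integral h z
  rw [hval] at hsplit
  linarith [hI ▸ hsq]


lemma glf_nonneg_of_nonpos (h : MemB1 φ) (hl0 : 0 < lam) (hl1 : lam ≤ 1) (hz : z ≤ 0) :
    0 ≤ GLF z lam φ := by
  by_cases hi : IntegrableOn (gI z lam φ) (Ioi 0)
  · have hq : IntegrableOn (fun t => lam/2 * (φ t)^4) (Ioi 0) := by
      have he : (fun t => lam/2 * (φ t)^4)
          = fun t => gI z lam φ t - (deriv φ t)^2 - (t - z)^2 * (φ t)^2 + lam * (φ t)^2 := by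
        funext t; unfold gI; ring
      rw [he]
      exact ((hi.sub h.2.2.2.1).sub (int_pot h z)).add (h.2.2.1.const_mul lam)
    have hQ : 0 ≤ ∫ t in Ioi (0:ℝ), lam/2 * (φ t)^4 :=
      setIntegral_nonneg measurableSet_Ioi (fun t _ => by positivity)
    have hosc := osc h z (mul_nonpos_of_nonpos_of_nonneg hz (sq_nonneg _))
    have hkw : IntegrableOn (fun t => (deriv φ t)^2 + (t - z)^2 * (φ t)^2) (Ioi 0) :=
      h.2.2.2.1.add (int_pot h z)
    have hkwq : IntegrableOn
        (fun t => ((deriv φ t)^2 + (t - z)^2 * (φ t)^2) + lam/2 * (φ t)^4) (Ioi 0) :=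
      hkw.add hq
    have hsplit : GLF z lam φ
        = (((∫ t in Ioi (0:ℝ), (deriv φ t)^2) + ∫ t in Ioi (0:ℝ), (t - z)^2 * (φ t)^2)
          + ∫ t in Ioi (0:ℝ), lam/2 * (φ t)^4) - lam * ∫ t in Ioi (0:ℝ), (φ t)^2 := by
      rw [glf_eq]
      have he : (fun t => gI z lam φ t)
          = fun t => (((deriv φ t)^2 + (t - z)^2 * (φ t)^2) + lam/2 * (φ t)^4)
            - lam * (φ t)^2 := by
        funext t; unfold gI; ring
      rw [he, integral_sub hkwq (h.2.2.1.const_mul lam), integral_add hkw hq,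
        integral_add h.2.2.2.1 (int_pot h z), integral_const_mul, integral_const_mul]
    have ha := phisq_int_nonneg (φ := φ)
    rw [hsplit]
    nlinarith
  · rw [glf_eq, integral_undef hi]

lemma einf_nonneg_of_nonpos (hl0 : 0 < lam) (hl1 : lam ≤ 1) {z : ℝ} (hz : z ≤ 0) :
    0 ≤ Einf lam z :=
  le_einf z (fun ψ hψ => glf_nonneg_of_nonpos hψ hl0 hl1 hz)

lemma st_deriv_bound : ∃ M : ℝ, 0 < M ∧ ∀ x : ℝ, |deriv Real.smoothTransition x| ≤ M := by
  have hc : Continuous (deriv Real.smoothTransition) :=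
    (Real.smoothTransition.contDiff (n := ⊤)).continuous_deriv (by exact_mod_cast le_top)
  obtain ⟨M₀, hM₀⟩ :=
    (isCompact_Icc (a := (0:ℝ)) (b := 1)).exists_bound_of_continuousOn hc.continuousOn
  refine ⟨max M₀ 1, lt_of_lt_of_le one_pos (le_max_right _ _), fun x => ?_⟩
  by_cases hx : x ∈ Icc (0:ℝ) 1
  · exact le_trans (hM₀ x hx) (le_max_left _ _)
  · have hd : deriv Real.smoothTransition x = 0 := by
      rw [mem_Icc, not_and_or] at hx
      rcases hx with hx | hx <;> push_neg at hx
      · have he : Real.smoothTransition =ᶠ[𝓝 x] (fun _ => (0:ℝ)) := by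
          filter_upwards [Iio_mem_nhds hx] with y hy
          exact Real.smoothTransition.zero_of_nonpos (le_of_lt hy)
        rw [he.deriv_eq, deriv_const']
      · have he : Real.smoothTransition =ᶠ[𝓝 x] (fun _ => (1:ℝ)) := by
          filter_upwards [Ioi_mem_nhds hx] with y hy
          exact Real.smoothTransition.one_of_one_le (le_of_lt hy)
        rw [he.deriv_eq, deriv_const']
    rw [hd, abs_zero]
    exact le_trans zero_le_one (le_max_right _ _)

/-- the angle function for the IMS partition -/
def θf (z : ℝ) : ℝ → ℝ := fun t => (π/2) * Real.smoothTransition (4*t/z - 1)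
/-- its derivative -/
def θD (z : ℝ) : ℝ → ℝ := fun t => (π/2) * (deriv Real.smoothTransition (4*t/z - 1) * (4/z))

lemma θf_cont (z : ℝ) : Continuous (θf z) :=
  continuous_const.mul (Real.smoothTransition.continuous.comp (by continuity))

lemma θf_hasDeriv (z : ℝ) (t : ℝ) : HasDerivAt (θf z) (θD z t) t := by
  have hin : HasDerivAt (fun t : ℝ => 4*t/z - 1) (4/z) t := by
    have h1 : HasDerivAt (fun t : ℝ => 4*t) 4 t := by
      simpa using (hasDerivAt_id t).const_mul (4:ℝ)
    simpa using (h1.div_const z).sub_const 1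
  have hst : HasDerivAt Real.smoothTransition
      (deriv Real.smoothTransition (4*t/z - 1)) (4*t/z - 1) :=
    ((Real.smoothTransition.contDiff (n := ⊤)).differentiable (by simp)).differentiableAt.hasDerivAt
  have hft := (hst.comp t hin).const_mul (π/2)
  have : (fun t : ℝ => π/2 * (Real.smoothTransition ∘ fun t => 4*t/z - 1) t) = θf z := by
    funext s; simp [θf, Function.comp]
  rw [this] at hft
  exact hft

lemma θD_bound {M : ℝ} (hM0 : 0 < M) (hM : ∀ x, |deriv Real.smoothTransition x| ≤ M)
    {z : ℝ} (hz : 0 < z) (t : ℝ) : |θD z t| ≤ 2*π*M/z := by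
  unfold θD
  rw [abs_mul, abs_mul, abs_of_nonneg (by positivity : (0:ℝ) ≤ π/2),
    abs_of_nonneg (by positivity : (0:ℝ) ≤ 4/z)]
  have h1 := hM (4*t/z - 1)
  have hπ : (0:ℝ) < π := Real.pi_pos
  calc π/2 * (|deriv Real.smoothTransition (4*t/z - 1)| * (4/z))
      ≤ π/2 * (M * (4/z)) := by
        refine mul_le_mul_of_nonneg_left ?_ (by positivity)
        exact mul_le_mul_of_nonneg_right h1 (by positivity)
    _ = 2*π*M/z := by field_simp; ring
  
lemma θf_eq_zero {z t : ℝ} (hz : 0 < z) (ht : t ≤ z/4) : θf z t = 0 := by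
  unfold θf
  rw [Real.smoothTransition.zero_of_nonpos, mul_zero]
  rw [sub_nonpos, div_le_one hz]
  linarith

lemma θf_eq_pi2 {z t : ℝ} (hz : 0 < z) (ht : z/2 ≤ t) : θf z t = π/2 := by
  unfold θf
  rw [Real.smoothTransition.one_of_one_le, mul_one]
  rw [le_sub_iff_add_le, le_div_iff₀ hz]
  linarith

/-- first piece of the partition applied to φ -/
def ps1 (z : ℝ) (φ : ℝ → ℝ) : ℝ → ℝ := fun t => Real.sin (θf z t) * φ t
def ps2 (z : ℝ) (φ : ℝ → ℝ) : ℝ → ℝ := fun t => Real.cos (θf z t) * φ t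

lemma ps1_hasDeriv (h : MemB1 φ) (z : ℝ) {t : ℝ} (ht : t ∈ Ioi (0:ℝ)) :
    HasDerivAt (ps1 z φ)
      (Real.cos (θf z t) * θD z t * φ t + Real.sin (θf z t) * deriv φ t) t :=
  ((θf_hasDeriv z t).sin).mul (h.2.1 t ht).hasDerivAt

lemma ps2_hasDeriv (h : MemB1 φ) (z : ℝ) {t : ℝ} (ht : t ∈ Ioi (0:ℝ)) :
    HasDerivAt (ps2 z φ)
      (-Real.sin (θf z t) * θD z t * φ t + Real.cos (θf z t) * deriv φ t) t :=
  ((θf_hasDeriv z t).cos).mul (h.2.1 t ht).hasDerivAt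

lemma ps1_deriv (h : MemB1 φ) (z : ℝ) {t : ℝ} (ht : t ∈ Ioi (0:ℝ)) :
    deriv (ps1 z φ) t
      = Real.cos (θf z t) * θD z t * φ t + Real.sin (θf z t) * deriv φ t :=
  (ps1_hasDeriv h z ht).deriv

lemma ps2_deriv (h : MemB1 φ) (z : ℝ) {t : ℝ} (ht : t ∈ Ioi (0:ℝ)) :
    deriv (ps2 z φ) t
      = -Real.sin (θf z t) * θD z t * φ t + Real.cos (θf z t) * deriv φ t :=
  (ps2_hasDeriv h z ht).deriv


lemma sin_sq_le_one' (x : ℝ) : Real.sin x ^ 2 ≤ 1 := Real.sin_sq_le_one x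
lemma cos_sq_le_one' (x : ℝ) : Real.cos x ^ 2 ≤ 1 := Real.cos_sq_le_one x

lemma ps1_sq_int (h : MemB1 φ) (z : ℝ) :
    IntegrableOn (fun t => (ps1 z φ t) ^ 2) (Ioi 0) := by
  have hm : AEStronglyMeasurable (fun t => (ps1 z φ t) ^ 2) (volume.restrict (Ioi 0)) := by
    have : ContinuousOn (fun t => ps1 z φ t) (Ioi 0) :=
      ((Real.continuous_sin.comp (θf_cont z)).continuousOn).mul (contOn h)
    exact (this.pow 2).aestronglyMeasurable measurableSet_Ioi
  refine Integrable.mono' h.2.2.1 hm ?_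
  filter_upwards with t
  rw [Real.norm_eq_abs, abs_of_nonneg (sq_nonneg _)]
  unfold ps1
  nlinarith [sin_sq_le_one' (θf z t), sq_nonneg (φ t), sq_nonneg (Real.sin (θf z t) * φ t)]

lemma ps2_sq_int (h : MemB1 φ) (z : ℝ) :
    IntegrableOn (fun t => (ps2 z φ t) ^ 2) (Ioi 0) := by
  have hm : AEStronglyMeasurable (fun t => (ps2 z φ t) ^ 2) (volume.restrict (Ioi 0)) := by
    have : ContinuousOn (fun t => ps2 z φ t) (Ioi 0) :=
      ((Real.continuous_cos.comp (θf_cont z)).continuousOn).mul (contOn h)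
    exact (this.pow 2).aestronglyMeasurable measurableSet_Ioi
  refine Integrable.mono' h.2.2.1 hm ?_
  filter_upwards with t
  rw [Real.norm_eq_abs, abs_of_nonneg (sq_nonneg _)]
  unfold ps2
  nlinarith [cos_sq_le_one' (θf z t), sq_nonneg (φ t), sq_nonneg (Real.cos (θf z t) * φ t)]

lemma ps1_tsq_int (h : MemB1 φ) (z : ℝ) :
    IntegrableOn (fun t => (t * ps1 z φ t) ^ 2) (Ioi 0) := by
  have hm : AEStronglyMeasurable (fun t => (t * ps1 z φ t) ^ 2) (volume.restrict (Ioi 0)) := by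
    have : ContinuousOn (fun t => t * ps1 z φ t) (Ioi 0) :=
      continuous_id.continuousOn.mul
        (((Real.continuous_sin.comp (θf_cont z)).continuousOn).mul (contOn h))
    exact (this.pow 2).aestronglyMeasurable measurableSet_Ioi
  refine Integrable.mono' h.2.2.2.2 hm ?_
  filter_upwards with t
  rw [Real.norm_eq_abs, abs_of_nonneg (sq_nonneg _)]
  unfold ps1
  nlinarith [sin_sq_le_one' (θf z t), sq_nonneg (t * φ t), sq_nonneg (t * (Real.sin (θf z t) * φ t))]

lemma ps1_deriv_sq_int {M : ℝ} (hM0 : 0 < M) (hM : ∀ x, |deriv Real.smoothTransition x| ≤ M)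
    (h : MemB1 φ) {z : ℝ} (hz : 0 < z) :
    IntegrableOn (fun t => (deriv (ps1 z φ) t) ^ 2) (Ioi 0) := by
  have hg : IntegrableOn
      (fun t => 2 * (2*π*M/z)^2 * (φ t)^2 + 2 * (deriv φ t)^2) (Ioi 0) :=
    (h.2.2.1.const_mul _).add (h.2.2.2.1.const_mul 2)
  have hm : AEStronglyMeasurable (fun t => (deriv (ps1 z φ) t) ^ 2) (volume.restrict (Ioi 0)) :=
    ((measurable_deriv (ps1 z φ)).pow_const 2).aestronglyMeasurable
  refine Integrable.mono' hg hm ?_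
  rw [ae_restrict_iff' measurableSet_Ioi]
  filter_upwards with t ht
  rw [Real.norm_eq_abs, abs_of_nonneg (sq_nonneg _), ps1_deriv h z ht]
  have hb := θD_bound hM0 hM hz t
  have hb2 : (θD z t)^2 ≤ (2*π*M/z)^2 := by
    rw [← sq_abs]
    exact pow_le_pow_left₀ (abs_nonneg _) hb 2
  nlinarith [sin_sq_le_one' (θf z t), cos_sq_le_one' (θf z t), sq_nonneg (φ t),
    sq_nonneg (deriv φ t), sq_nonneg (Real.cos (θf z t) * θD z t * φ t - Real.sin (θf z t) * deriv φ t),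
    mul_nonneg (mul_nonneg (sq_nonneg (Real.cos (θf z t))) (sq_nonneg (φ t))) (sub_nonneg.2 hb2),
    sq_nonneg (θD z t * φ t), mul_nonneg (sq_nonneg (θD z t * φ t)) (sub_nonneg.2 (cos_sq_le_one' (θf z t))),
    mul_nonneg (sq_nonneg (deriv φ t)) (sub_nonneg.2 (sin_sq_le_one' (θf z t)))]

lemma ps2_deriv_sq_int {M : ℝ} (hM0 : 0 < M) (hM : ∀ x, |deriv Real.smoothTransition x| ≤ M)
    (h : MemB1 φ) {z : ℝ} (hz : 0 < z) :
    IntegrableOn (fun t => (deriv (ps2 z φ) t) ^ 2) (Ioi 0) := by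
  have hg : IntegrableOn
      (fun t => 2 * (2*π*M/z)^2 * (φ t)^2 + 2 * (deriv φ t)^2) (Ioi 0) :=
    (h.2.2.1.const_mul _).add (h.2.2.2.1.const_mul 2)
  have hm : AEStronglyMeasurable (fun t => (deriv (ps2 z φ) t) ^ 2) (volume.restrict (Ioi 0)) :=
    ((measurable_deriv (ps2 z φ)).pow_const 2).aestronglyMeasurable
  refine Integrable.mono' hg hm ?_
  rw [ae_restrict_iff' measurableSet_Ioi]
  filter_upwards with t ht
  rw [Real.norm_eq_abs, abs_of_nonneg (sq_nonneg _), ps2_deriv h z ht]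
  have hb := θD_bound hM0 hM hz t
  have hb2 : (θD z t)^2 ≤ (2*π*M/z)^2 := by
    rw [← sq_abs]
    exact pow_le_pow_left₀ (abs_nonneg _) hb 2
  nlinarith [sin_sq_le_one' (θf z t), cos_sq_le_one' (θf z t), sq_nonneg (φ t),
    sq_nonneg (deriv φ t), sq_nonneg (Real.sin (θf z t) * θD z t * φ t + Real.cos (θf z t) * deriv φ t),
    mul_nonneg (mul_nonneg (sq_nonneg (Real.sin (θf z t))) (sq_nonneg (φ t))) (sub_nonneg.2 hb2),
    sq_nonneg (θD z t * φ t), mul_nonneg (sq_nonneg (θD z t * φ t)) (sub_nonneg.2 (sin_sq_le_one' (θf z t))),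
    mul_nonneg (sq_nonneg (deriv φ t)) (sub_nonneg.2 (cos_sq_le_one' (θf z t)))]

lemma ps1_memB1 {M : ℝ} (hM0 : 0 < M) (hM : ∀ x, |deriv Real.smoothTransition x| ≤ M)
    (h : MemB1 φ) {z : ℝ} (hz : 0 < z) : MemB1 (ps1 z φ) := by
  refine ⟨?_, ?_, ps1_sq_int h z, ps1_deriv_sq_int hM0 hM h hz, ps1_tsq_int h z⟩
  · exact ((Real.continuous_sin.comp (θf_cont z)).continuousAt.continuousWithinAt).mul h.1
  · exact fun t ht => (ps1_hasDeriv h z ht).differentiableAt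

lemma ps1_zero (hz : 0 < z) : ps1 z φ 0 = 0 := by
  unfold ps1
  rw [θf_eq_zero hz (by positivity), Real.sin_zero, zero_mul]


lemma quartic_int (h : MemB1 φ) (hl0 : 0 < lam) (hi : IntegrableOn (gI z lam φ) (Ioi 0)) :
    IntegrableOn (fun t => (φ t)^4) (Ioi 0) := by
  have he : (fun t => (φ t)^4)
      = fun t => (2/lam) * ((gI z lam φ t - (deriv φ t)^2 - (t - z)^2 * (φ t)^2
        + lam * (φ t)^2)) := by
    funext t; unfold gI; field_simp; ring
  rw [he]
  exact (((hi.sub h.2.2.2.1).sub (int_pot h z)).add (h.2.2.1.const_mul lam)).const_mul _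

lemma glf_split (h : MemB1 φ) (hl0 : 0 < lam) (hi : IntegrableOn (gI z lam φ) (Ioi 0)) :
    GLF z lam φ
      = (((∫ t in Ioi (0:ℝ), (deriv φ t)^2) + ∫ t in Ioi (0:ℝ), (t - z)^2 * (φ t)^2)
        + lam/2 * ∫ t in Ioi (0:ℝ), (φ t)^4) - lam * ∫ t in Ioi (0:ℝ), (φ t)^2 := by
  have hq4 := quartic_int h hl0 hi
  have hq : IntegrableOn (fun t => lam/2 * (φ t)^4) (Ioi 0) := hq4.const_mul _
  have hkw : IntegrableOn (fun t => (deriv φ t)^2 + (t - z)^2 * (φ t)^2) (Ioi 0) :=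
    h.2.2.2.1.add (int_pot h z)
  have hkwq : IntegrableOn
      (fun t => ((deriv φ t)^2 + (t - z)^2 * (φ t)^2) + lam/2 * (φ t)^4) (Ioi 0) :=
    hkw.add hq
  rw [glf_eq]
  have he : (fun t => gI z lam φ t)
      = fun t => (((deriv φ t)^2 + (t - z)^2 * (φ t)^2) + lam/2 * (φ t)^4)
        - lam * (φ t)^2 := by
    funext t; unfold gI; ring
  rw [he, integral_sub hkwq (h.2.2.1.const_mul lam), integral_add hkw hq,
    integral_add h.2.2.2.1 (int_pot h z), integral_const_mul, integral_const_mul]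

lemma θDφ_int {M : ℝ} (hM0 : 0 < M) (hM : ∀ x, |deriv Real.smoothTransition x| ≤ M)
    (h : MemB1 φ) {z : ℝ} (hz : 0 < z) :
    IntegrableOn (fun t => (θD z t)^2 * (φ t)^2) (Ioi 0) := by
  have hg : IntegrableOn (fun t => (2*π*M/z)^2 * (φ t)^2) (Ioi 0) := h.2.2.1.const_mul _
  have hθc : Continuous (θD z) := by
    have : Continuous (deriv Real.smoothTransition) :=
      (Real.smoothTransition.contDiff (n := ⊤)).continuous_deriv (by exact_mod_cast le_top)
    unfold θD
    exact continuous_const.mul ((this.comp (by continuity)).mul continuous_const)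
  have hm : AEStronglyMeasurable (fun t => (θD z t)^2 * (φ t)^2) (volume.restrict (Ioi 0)) :=
    ((hθc.continuousOn.pow 2).mul ((contOn h).pow 2)).aestronglyMeasurable measurableSet_Ioi
  refine Integrable.mono' hg hm ?_
  filter_upwards with t
  rw [Real.norm_eq_abs, abs_of_nonneg (by positivity)]
  have hb := θD_bound hM0 hM hz t
  have hb2 : (θD z t)^2 ≤ (2*π*M/z)^2 := by
    rw [← sq_abs]
    exact pow_le_pow_left₀ (abs_nonneg _) hb 2
  nlinarith [sq_nonneg (φ t)]

/-- IMS decomposition of the kinetic energy. -/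
lemma ims_kinetic {M : ℝ} (hM0 : 0 < M) (hM : ∀ x, |deriv Real.smoothTransition x| ≤ M)
    (h : MemB1 φ) {z : ℝ} (hz : 0 < z) :
    (∫ t in Ioi (0:ℝ), (deriv φ t)^2)
      = ((∫ t in Ioi (0:ℝ), (deriv (ps1 z φ) t)^2)
        + ∫ t in Ioi (0:ℝ), (deriv (ps2 z φ) t)^2)
        - ∫ t in Ioi (0:ℝ), (θD z t)^2 * (φ t)^2 := by
  have hθint := θDφ_int hM0 hM h hz
  have h1 := ps1_deriv_sq_int hM0 hM h hz
  have h2 := ps2_deriv_sq_int hM0 hM h hz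
  have hcong : ∫ t in Ioi (0:ℝ), (deriv φ t)^2
      = ∫ t in Ioi (0:ℝ),
        (((deriv (ps1 z φ) t)^2 + (deriv (ps2 z φ) t)^2) - (θD z t)^2 * (φ t)^2) := by
    refine setIntegral_congr_fun measurableSet_Ioi (fun t ht => ?_)
    rw [ps1_deriv h z ht, ps2_deriv h z ht]
    have hsc := Real.sin_sq_add_cos_sq (θf z t)
    nlinarith [hsc]
  have h12 : IntegrableOn (fun t => (deriv (ps1 z φ) t)^2 + (deriv (ps2 z φ) t)^2) (Ioi 0) :=
    h1.add h2
  rw [hcong, integral_sub h12 hθint, integral_add h1 h2]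


lemma far_bound (hl0 : 0 < lam) (hl1 : lam ≤ 1) :
    ∃ C : ℝ, 0 < C ∧ ∀ z : ℝ, 2 ≤ z → ∀ ψ : ℝ → ℝ, MemB1 ψ → -(C / z^2) ≤ GLF z lam ψ := by
  obtain ⟨M, hM0, hM⟩ := st_deriv_bound
  refine ⟨(2*π*M)^2 * (10/lam), by positivity, fun z hz φ h => ?_⟩
  have hzpos : (0:ℝ) < z := lt_of_lt_of_le two_pos hz
  have hπ := Real.pi_pos
  by_cases hneg : GLF z lam φ < 0
  swap
  · push_neg at hneg
    refine le_trans ?_ hneg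
    have : 0 ≤ (2*π*M)^2 * (10/lam) / z^2 := by positivity
    linarith
  obtain ⟨hi, ha10, _⟩ := near_bounds h hl0 hl1 hneg
  have hmem1 := ps1_memB1 hM0 hM h hzpos
  -- integrability of the ps2 pieces
  have hpot2 : IntegrableOn (fun t => (t - z)^2 * (ps2 z φ t)^2) (Ioi 0) := by
    have hm : AEStronglyMeasurable (fun t => (t - z)^2 * (ps2 z φ t)^2)
        (volume.restrict (Ioi 0)) := by
      have hc : ContinuousOn (fun t => ps2 z φ t) (Ioi 0) :=
        ((Real.continuous_cos.comp (θf_cont z)).continuousOn).mul (contOn h)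
      have hc2 : Continuous (fun t : ℝ => (t - z)^2) := by continuity
      exact (hc2.continuousOn.mul (hc.pow 2)).aestronglyMeasurable measurableSet_Ioi
    refine Integrable.mono' (int_pot h z) hm ?_
    filter_upwards with t
    rw [Real.norm_eq_abs, abs_of_nonneg (by positivity)]
    unfold ps2
    nlinarith [cos_sq_le_one' (θf z t), sq_nonneg (t - z), sq_nonneg (φ t),
      mul_nonneg (sq_nonneg (t - z)) (sq_nonneg (Real.cos (θf z t) * φ t)),
      mul_nonneg (sq_nonneg (t - z)) (sq_nonneg (φ t)),
      mul_nonneg (mul_nonneg (sq_nonneg (t-z)) (sq_nonneg (φ t)))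
        (sub_nonneg.2 (cos_sq_le_one' (θf z t)))]
  have hpot1 : IntegrableOn (fun t => (t - z)^2 * (ps1 z φ t)^2) (Ioi 0) := int_pot hmem1 z
  -- potential split
  have hwsplit : ∫ t in Ioi (0:ℝ), (t - z)^2 * (φ t)^2
      = (∫ t in Ioi (0:ℝ), (t - z)^2 * (ps1 z φ t)^2)
        + ∫ t in Ioi (0:ℝ), (t - z)^2 * (ps2 z φ t)^2 := by
    have hcong : ∫ t in Ioi (0:ℝ), (t - z)^2 * (φ t)^2
        = ∫ t in Ioi (0:ℝ), ((t - z)^2 * (ps1 z φ t)^2 + (t - z)^2 * (ps2 z φ t)^2) := by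
      refine setIntegral_congr_fun measurableSet_Ioi (fun t _ => ?_)
      unfold ps1 ps2
      linear_combination (-((t - z)^2 * (φ t)^2)) * (Real.sin_sq_add_cos_sq (θf z t))
    rw [hcong, integral_add hpot1 hpot2]
  -- mass split
  have hs1 := ps1_sq_int h z
  have hs2 := ps2_sq_int h z
  have hasplit : ∫ t in Ioi (0:ℝ), (φ t)^2
      = (∫ t in Ioi (0:ℝ), (ps1 z φ t)^2) + ∫ t in Ioi (0:ℝ), (ps2 z φ t)^2 := by
    have hcong : ∫ t in Ioi (0:ℝ), (φ t)^2
        = ∫ t in Ioi (0:ℝ), ((ps1 z φ t)^2 + (ps2 z φ t)^2) := by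
      refine setIntegral_congr_fun measurableSet_Ioi (fun t _ => ?_)
      unfold ps1 ps2
      linear_combination (-((φ t)^2)) * (Real.sin_sq_add_cos_sq (θf z t))
    rw [hcong, integral_add hs1 hs2]
  -- far-region estimate for ps2
  have ha2w2 : ∫ t in Ioi (0:ℝ), (ps2 z φ t)^2
      ≤ ∫ t in Ioi (0:ℝ), (t - z)^2 * (ps2 z φ t)^2 := by
    refine setIntegral_mono_on hs2 hpot2 measurableSet_Ioi (fun t ht => ?_)
    by_cases hle : z/2 ≤ t
    · have : ps2 z φ t = 0 := by
        unfold ps2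
        rw [θf_eq_pi2 hzpos hle, Real.cos_pi_div_two, zero_mul]
      rw [this]
      simp
    · push_neg at hle
      have h1 : 1 ≤ (t - z)^2 := by nlinarith
      nlinarith [sq_nonneg (ps2 z φ t)]
  -- oscillator estimate for ps1
  have hosc1 : ∫ t in Ioi (0:ℝ), (ps1 z φ t)^2
      ≤ (∫ t in Ioi (0:ℝ), (deriv (ps1 z φ) t)^2)
        + ∫ t in Ioi (0:ℝ), (t - z)^2 * (ps1 z φ t)^2 := by
    refine osc hmem1 z ?_
    rw [ps1_zero hzpos]
    simp
  -- localization error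
  have hθle : ∫ t in Ioi (0:ℝ), (θD z t)^2 * (φ t)^2
      ≤ (2*π*M/z)^2 * ∫ t in Ioi (0:ℝ), (φ t)^2 := by
    have hmono : ∫ t in Ioi (0:ℝ), (θD z t)^2 * (φ t)^2
        ≤ ∫ t in Ioi (0:ℝ), (2*π*M/z)^2 * (φ t)^2 := by
      refine setIntegral_mono_on (θDφ_int hM0 hM h hzpos) (h.2.2.1.const_mul _)
        measurableSet_Ioi (fun t _ => ?_)
      have hb := θD_bound hM0 hM hzpos t
      have hb2 : (θD z t)^2 ≤ (2*π*M/z)^2 := by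
        rw [← sq_abs]
        exact pow_le_pow_left₀ (abs_nonneg _) hb 2
      nlinarith [sq_nonneg (φ t)]
    rwa [integral_const_mul] at hmono
  -- quartic term nonneg
  have hQ4 : 0 ≤ ∫ t in Ioi (0:ℝ), (φ t)^4 :=
    setIntegral_nonneg measurableSet_Ioi (fun t _ => by positivity)
  have hk2 : 0 ≤ ∫ t in Ioi (0:ℝ), (deriv (ps2 z φ) t)^2 :=
    setIntegral_nonneg measurableSet_Ioi (fun t _ => sq_nonneg _)
  have ha0 := phisq_int_nonneg (φ := φ)
  have hkin := ims_kinetic hM0 hM h hzpos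
  have hglf := glf_split h hl0 hi
  -- final assembly
  have hTa : ∫ t in Ioi (0:ℝ), (θD z t)^2 * (φ t)^2
      ≤ (2*π*M)^2 * (10/lam) / z^2 := by
    have h1 : (2*π*M/z)^2 * (∫ t in Ioi (0:ℝ), (φ t)^2)
        ≤ (2*π*M/z)^2 * (10/lam) := by
      refine mul_le_mul_of_nonneg_left ha10 (by positivity)
    have h2 : (2*π*M/z)^2 * (10/lam) = (2*π*M)^2 * (10/lam) / z^2 := by
      field_simp
    linarith
  have hlam_a : lam * (∫ t in Ioi (0:ℝ), (φ t)^2) ≤ ∫ t in Ioi (0:ℝ), (φ t)^2 := by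
    nlinarith
  have hQ4' : 0 ≤ lam/2 * ∫ t in Ioi (0:ℝ), (φ t)^4 := by positivity
  rw [hglf, hkin]
  linarith [hTa, hosc1, ha2w2, hQ4', hk2, hlam_a, hwsplit, hasplit]


end ZA

-- STATEMENT 6: for `0 < λ ≤ 1`, the function `z ↦ E(z,λ)` attains its infimum
-- over `ℝ` at some point `ζ(λ) > 0`.
open ZA in
/-- for `0 < λ ≤ 1`, the function `z ↦ E(z,λ)` attains its infimum
over `ℝ` at some point `ζ(λ) > 0`. -/
theorem zeta_exists (lam : ℝ) (hlam0 : 0 < lam) (hlam1 : lam ≤ 1) :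
    ∃ ζ : ℝ, 0 < ζ ∧ ∀ z : ℝ, Einf lam ζ ≤ Einf lam z := by
  by_cases hex : ∃ z₀ : ℝ, Einf lam z₀ < 0
  swap
  · push_neg at hex
    exact ⟨1, one_pos, fun z => le_trans (einf_nonpos hlam0 hlam1 1) (hex z)⟩
  obtain ⟨z₀, hz₀⟩ := hex
  have hz₀pos : 0 < z₀ := by
    by_contra hle
    push_neg at hle
    exact absurd hz₀ (not_lt.2 (einf_nonneg_of_nonpos hlam0 hlam1 hle))
  obtain ⟨C, hC0, hC⟩ := far_bound hlam0 hlam1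
  have hE0 : 0 < -Einf lam z₀ := by linarith
  set S : ℝ := Real.sqrt (C / (-Einf lam z₀)) with hSdef
  have hS0 : 0 ≤ S := Real.sqrt_nonneg _
  set Z : ℝ := max (max 2 z₀) (S + 1) with hZdef
  have hZ2 : 2 ≤ Z := le_trans (le_max_left _ _) (le_max_left _ _)
  have hZz₀ : z₀ ≤ Z := le_trans (le_max_right _ _) (le_max_left _ _)
  have hZS : S + 1 ≤ Z := le_max_right _ _
  have hZpos : 0 < Z := by linarith
  -- far region estimate
  have hfar : ∀ z : ℝ, Z < z → Einf lam z₀ ≤ Einf lam z := by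
    intro z hz
    have hz2 : 2 ≤ z := by linarith
    have hzpos : 0 < z := by linarith
    have hlow : -(C / z^2) ≤ Einf lam z := le_einf z (fun ψ hψ => hC z hz2 ψ hψ)
    have hsq : S^2 = C / (-Einf lam z₀) := Real.sq_sqrt (by positivity)
    have hzS : S < z := by linarith
    have hz2S : S^2 ≤ z^2 := by nlinarith
    have hkey : C / z^2 ≤ -Einf lam z₀ := by
      rw [div_le_iff₀ (by positivity)]
      rw [hsq] at hz2S
      rw [div_le_iff₀ hE0] at hz2S
      nlinarith
    linarith
  -- minimization over the compact interval
  have hcont : ContinuousOn (fun z => Einf lam z) (Icc 0 Z) :=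
    (einf_continuousOn hlam0 hlam1 hZpos).mono (Icc_subset_Icc (by linarith) le_rfl)
  obtain ⟨ζ, hζmem, hζmin⟩ :=
    (isCompact_Icc (a := (0:ℝ)) (b := Z)).exists_isMinOn
      (nonempty_Icc.2 hZpos.le) hcont
  have hζle : ∀ z ∈ Icc (0:ℝ) Z, Einf lam ζ ≤ Einf lam z := fun z hz =>
    isMinOn_iff.mp hζmin z hz
  have hζz₀ : Einf lam ζ ≤ Einf lam z₀ := hζle z₀ ⟨hz₀pos.le, hZz₀⟩
  have hζneg : Einf lam ζ < 0 := lt_of_le_of_lt hζz₀ hz₀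
  have hζpos : 0 < ζ := by
    rcases lt_or_eq_of_le hζmem.1 with h | h
    · exact h
    · exfalso
      have : 0 ≤ Einf lam ζ := by
        rw [← h]
        exact einf_nonneg_of_nonpos hlam0 hlam1 le_rfl
      linarith
  refine ⟨ζ, hζpos, fun z => ?_⟩
  rcases le_or_gt z 0 with hz | hz
  · exact le_trans hζneg.le (einf_nonneg_of_nonpos hlam0 hlam1 hz)
  rcases le_or_gt z Z with hzZ | hzZ
  · exact hζle z ⟨hz.le, hzZ⟩
  · exact le_trans hζz₀ (hfar z hzZ)
end
end

section
/- Let Θ₀ < λ ≤ 1 and suppose the map (z,φ) ↦ F_{z,λ}(φ) on ℝ × B¹(ℝ⁺) attains its global minimum at (ζ, f) with f nonnegative. Then ∫₀^∞ (t−ζ) f(t)² dt = 0, and consequently ζ > 0. -/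
open MeasureTheory Set Real Filter

noncomputable section

lemma MemB1.contOn {φ : ℝ → ℝ} (h : MemB1 φ) : ContinuousOn φ (Ioi 0) :=
  fun t ht => ((h.2.1 t ht).continuousAt).continuousWithinAt

lemma MemB1.int_t_sq {φ : ℝ → ℝ} (h : MemB1 φ) :
    IntegrableOn (fun t => t * φ t ^ 2) (Ioi 0) := by
  have hg : IntegrableOn (fun t => (t * φ t) ^ 2 + φ t ^ 2) (Ioi 0) :=
    h.2.2.2.2.add h.2.2.1
  refine hg.mono' ?_ ?_
  · exact ((continuousOn_id.mul ((h.contOn).mul h.contOn)).aestronglyMeasurable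
      measurableSet_Ioi).congr (by
        filter_upwards with t
        simp only [id, Pi.mul_apply]
        ring)
  · filter_upwards with t
    have h1 : |t| ≤ t ^ 2 + 1 := by nlinarith [sq_abs t, abs_nonneg t]
    have h2 : (0:ℝ) ≤ φ t ^ 2 := sq_nonneg _
    rw [Real.norm_eq_abs, abs_mul, abs_of_nonneg h2]
    nlinarith [sq_abs t, abs_nonneg t]

lemma MemB1.int_potential {φ : ℝ → ℝ} (h : MemB1 φ) (z : ℝ) :
    IntegrableOn (fun t => (t - z) ^ 2 * φ t ^ 2) (Ioi 0) := by
  have h1 := h.2.2.2.2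
  have h2 := h.int_t_sq.const_mul (-2 * z)
  have h3 := (h.2.2.1).const_mul (z ^ 2)
  exact ((h1.add h2).add h3).congr (ae_of_all _ fun t => by simp only [Pi.add_apply]; ring)

lemma MemB1.bounded {φ : ℝ → ℝ} (h : MemB1 φ) : ∃ M : ℝ, ∀ t ∈ Ioi (0:ℝ), φ t ^ 2 ≤ M := by
  obtain ⟨hc, hd, hsq, hd2, ht2⟩ := h
  have h' : MemB1 φ := ⟨hc, hd, hsq, hd2, ht2⟩
  set D : ℝ → ℝ := fun t => 2 * φ t ^ 1 * deriv φ t with hDdef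
  have hDle : ∀ t, |D t| ≤ φ t ^ 2 + deriv φ t ^ 2 := by
    intro t
    rw [hDdef]
    simp only [pow_one]
    rw [abs_mul, abs_mul, abs_two]
    nlinarith [abs_nonneg (φ t), abs_nonneg (deriv φ t), sq_abs (φ t), sq_abs (deriv φ t),
      sq_nonneg (|φ t| - |deriv φ t|)]
  have hsum : IntegrableOn (fun t => φ t ^ 2 + deriv φ t ^ 2) (Ioi 0) := hsq.add hd2
  have hDmeas : AEStronglyMeasurable D (volume.restrict (Ioi 0)) := by
    apply AEStronglyMeasurable.mul
    · exact (aestronglyMeasurable_const.mul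
        ((h'.contOn.pow 1).aestronglyMeasurable measurableSet_Ioi))
    · exact (measurable_deriv φ).aestronglyMeasurable.restrict
  have hDint : IntegrableOn D (Ioi 0) :=
    hsum.mono' hDmeas (ae_of_all _ fun t => by simpa [Real.norm_eq_abs] using hDle t)
  have habsint : IntegrableOn (fun t => |D t|) (Ioi 0) := hDint.abs
  set C := ∫ t in Ioi (0:ℝ), |D t| with hCdef
  set K := (∫ t in Ioi (0:ℝ), φ t ^ 2) + 1 with hKdef
  have hex : ∃ a ∈ Ioo (0:ℝ) 1, φ a ^ 2 ≤ K := by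
    by_contra hcon
    push_neg at hcon
    have h1 : K * (volume (Ioo (0:ℝ) 1)).toReal ≤ ∫ t in Ioo (0:ℝ) 1, φ t ^ 2 :=
      (by
        exact setIntegral_ge_of_const_le_real measurableSet_Ioo (by simp)
          (fun t ht => (hcon t ht).le) (hsq.mono_set Ioo_subset_Ioi_self))
    have h2 : (∫ t in Ioo (0:ℝ) 1, φ t ^ 2) ≤ ∫ t in Ioi (0:ℝ), φ t ^ 2 := by
      apply setIntegral_mono_set hsq (ae_of_all _ fun t => sq_nonneg _)
      exact HasSubset.Subset.eventuallyLE Ioo_subset_Ioi_self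
    simp [Real.volume_Ioo] at h1
    rw [hKdef] at h1
    linarith
  obtain ⟨a, ha, haK⟩ := hex
  refine ⟨K + C, fun b hb => ?_⟩
  have hFTC : ∀ u v : ℝ, 0 < u → u ≤ v → |φ v ^ 2 - φ u ^ 2| ≤ C := by
    intro u v hu huv
    have heq : ∫ t in u..v, D t = φ v ^ 2 - φ u ^ 2 := by
      apply intervalIntegral.integral_eq_sub_of_hasDerivAt
      · intro t ht
        rw [uIcc_of_le huv] at ht
        exact ((hd t (lt_of_lt_of_le hu ht.1)).hasDerivAt).pow 2
      · rw [intervalIntegrable_iff, uIoc_of_le huv]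
        exact hDint.mono_set (fun t ht => lt_of_lt_of_le hu ht.1.le)
    rw [← heq]
    calc |∫ t in u..v, D t| ≤ ∫ t in u..v, |D t| :=
          intervalIntegral.abs_integral_le_integral_abs huv
      _ ≤ C := by
          rw [intervalIntegral.integral_of_le huv, hCdef]
          apply setIntegral_mono_set habsint (ae_of_all _ fun t => abs_nonneg _)
          exact HasSubset.Subset.eventuallyLE (fun t ht => lt_of_lt_of_le hu ht.1.le)
  rcases le_or_gt a b with hab | hab
  · have := hFTC a b ha.1 hab
    rw [abs_le] at this
    linarith
  · have := hFTC b a hb hab.le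
    rw [abs_le] at this
    linarith

lemma MemB1.int_pow4 {φ : ℝ → ℝ} (h : MemB1 φ) :
    IntegrableOn (fun t => φ t ^ 4) (Ioi 0) := by
  obtain ⟨M, hM⟩ := h.bounded
  refine ((h.2.2.1).const_mul M).mono' ?_ ?_
  · exact ((h.contOn.pow 4).aestronglyMeasurable measurableSet_Ioi)
  · rw [ae_restrict_iff' measurableSet_Ioi]
    filter_upwards with t ht
    have h1 := hM t ht
    rw [Real.norm_eq_abs, abs_of_nonneg (by positivity)]
    nlinarith [sq_nonneg (φ t)]

lemma gaussian_hasDeriv (t : ℝ) :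
    HasDerivAt (fun t : ℝ => Real.exp (-(1/2) * t ^ 2)) (Real.exp (-(1/2) * t ^ 2) * (-t)) t := by
  have h1 : HasDerivAt (fun t : ℝ => -(1/2) * t ^ 2) (-t) t := by
    have := (hasDerivAt_pow 2 t).const_mul (-(1/2) : ℝ)
    simpa using this.congr_deriv (by ring)
  exact h1.exp

lemma memB1_gaussian : MemB1 (fun t : ℝ => Real.exp (-(1/2) * t ^ 2)) := by
  have hgint : Integrable (fun t : ℝ => Real.exp (-(1/2) * t ^ 2)) :=
    integrable_exp_neg_mul_sq (by norm_num)
  have hsq_eq : ∀ t : ℝ, Real.exp (-(1/2) * t ^ 2) ^ 2 = Real.exp (-1 * t ^ 2) := by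
    intro t; rw [sq, ← Real.exp_add]; ring_nf
  have hbound : ∀ t : ℝ, t ^ 2 * Real.exp (-1 * t ^ 2) ≤ 2 * Real.exp (-(1/2) * t ^ 2) := by
    intro t
    have h1 : (1/2) * t ^ 2 ≤ Real.exp ((1/2) * t ^ 2) := by
      linarith [Real.add_one_le_exp ((1/2) * t^2), sq_nonneg t]
    have hpos := Real.exp_pos ((1/2) * t ^ 2)
    have hmul : Real.exp ((1/2) * t^2) * (Real.exp ((1/2) * t^2))⁻¹ = 1 :=
      mul_inv_cancel₀ hpos.ne'
    have hinv : Real.exp (-(1/2) * t ^ 2) = (Real.exp ((1/2) * t ^ 2))⁻¹ := by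
      rw [show (-(1/2) : ℝ) * t ^ 2 = -((1/2) * t ^ 2) by ring, Real.exp_neg]
    have h3 : t ^ 2 * Real.exp (-(1/2) * t ^ 2) ≤ 2 := by
      rw [hinv]
      nlinarith [mul_le_mul_of_nonneg_right h1 (inv_nonneg.mpr hpos.le)]
    have h2 : Real.exp (-1 * t ^ 2) = Real.exp (-(1/2) * t ^ 2) * Real.exp (-(1/2) * t ^ 2) := by
      rw [← Real.exp_add]; ring_nf
    rw [h2]
    have he : (0:ℝ) ≤ Real.exp (-(1/2) * t ^ 2) := (Real.exp_pos _).le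
    nlinarith
  have hcont : Continuous (fun t : ℝ => Real.exp (-(1/2) * t ^ 2)) :=
    Real.continuous_exp.comp (by continuity)
  have hderiv : ∀ t : ℝ, deriv (fun t : ℝ => Real.exp (-(1/2) * t ^ 2)) t
      = Real.exp (-(1/2) * t ^ 2) * (-t) := fun t => (gaussian_hasDeriv t).deriv
  have hint2 : Integrable (fun t : ℝ => t ^ 2 * Real.exp (-1 * t ^ 2)) := by
    refine (hgint.const_mul 2).mono' ?_ (ae_of_all _ fun t => ?_)
    · exact ((continuous_pow 2).mul
        (Real.continuous_exp.comp (by continuity))).aestronglyMeasurable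
    · rw [Real.norm_eq_abs, abs_of_nonneg (by positivity)]
      exact hbound t
  refine ⟨hcont.continuousWithinAt, fun t _ => (gaussian_hasDeriv t).differentiableAt, ?_, ?_, ?_⟩
  · exact (hgint.mono' (hcont.pow 2).aestronglyMeasurable (ae_of_all _ fun t => by
      rw [Real.norm_eq_abs, Pi.pow_apply, abs_of_nonneg (by positivity), hsq_eq t]
      exact Real.exp_le_exp.2 (by nlinarith [sq_nonneg t]))).integrableOn
  · refine (hint2.congr (ae_of_all _ fun t => ?_)).integrableOn
    rw [hderiv t, mul_pow, hsq_eq t]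
    ring
  · refine (hint2.congr (ae_of_all _ fun t => ?_)).integrableOn
    rw [mul_pow, hsq_eq t]

lemma memB1_smul {φ : ℝ → ℝ} (c : ℝ) (h : MemB1 φ) : MemB1 (fun t => c * φ t) := by
  obtain ⟨hc, hd, hsq, hd2, ht2⟩ := h
  refine ⟨continuousWithinAt_const.mul hc, fun t ht => (hd t ht).const_mul c, ?_, ?_, ?_⟩
  · exact (hsq.const_mul (c ^ 2)).congr (ae_of_all _ fun t => by simp only; ring)
  · refine IntegrableOn.congr_fun (hd2.const_mul (c ^ 2) : IntegrableOn _ _ _) ?_ measurableSet_Ioi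
    intro t ht
    simp only
    rw [deriv_const_mul c (hd t ht)]
    ring
  · exact (ht2.const_mul (c ^ 2)).congr (ae_of_all _ fun t => by simp only; ring)

/-- `(ζ, f)` is a global minimum of the map `(z, φ) ↦ F_{z,λ}(φ)` on `ℝ × B¹(ℝ⁺)`. -/
def IsGlobalMin (lam ζ : ℝ) (f : ℝ → ℝ) : Prop :=
  MemB1 f ∧ ∀ z : ℝ, ∀ φ, MemB1 φ → GLF ζ lam f ≤ GLF z lam φ


lemma MemB1.int_num {φ : ℝ → ℝ} (h : MemB1 φ) (z : ℝ) :
    IntegrableOn (fun t => (deriv φ t) ^ 2 + (t - z) ^ 2 * φ t ^ 2) (Ioi 0) :=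
  h.2.2.2.1.add (h.int_potential z)

lemma Theta0_nonneg : 0 ≤ Theta0 := by
  apply Real.sInf_nonneg
  rintro x ⟨ξ, rfl⟩
  apply Real.sInf_nonneg
  rintro r ⟨φ, hφ, hN, rfl⟩
  apply div_nonneg _ hN.le
  exact setIntegral_nonneg measurableSet_Ioi fun t _ => by positivity

lemma exists_GLF_neg {lam : ℝ} (hlam : Theta0 < lam) :
    ∃ z ψ, MemB1 ψ ∧ GLF z lam ψ < 0 := by
  have hlampos : 0 < lam := lt_of_le_of_lt Theta0_nonneg hlam
  -- find ξ with mu1 ξ < lam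
  have hξ : ∃ ξ : ℝ, mu1 ξ < lam := by
    by_contra hcon
    push_neg at hcon
    have : lam ≤ Theta0 := le_csInf (Set.range_nonempty mu1) (by rintro x ⟨ξ, rfl⟩; exact hcon ξ)
    linarith
  obtain ⟨ξ, hξlt⟩ := hξ
  -- the set is nonempty
  set S := {r | ∃ φ, MemB1 φ ∧ (0 < ∫ t in Ioi (0:ℝ), (φ t) ^ 2) ∧ r = RQ ξ φ} with hS
  have hSne : S.Nonempty := by
    refine ⟨RQ ξ (fun t : ℝ => Real.exp (-(1/2) * t ^ 2)), (fun t : ℝ => Real.exp (-(1/2) * t ^ 2)),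
      memB1_gaussian, ?_, rfl⟩
    rw [setIntegral_pos_iff_support_of_nonneg_ae (ae_of_all _ fun t => sq_nonneg _)
      memB1_gaussian.2.2.1]
    have : Function.support (fun t : ℝ => Real.exp (-(1/2) * t ^ 2) ^ 2) = Set.univ := by
      ext t; simp [Function.mem_support, (Real.exp_pos _).ne']
    rw [this]
    simp [Real.volume_Ioi]
  have hSinf : mu1 ξ = sInf S := rfl
  obtain ⟨r, ⟨φ, hφ, hN, rfl⟩, hrlt⟩ := exists_lt_of_csInf_lt hSne (hSinf ▸ hξlt)
  set N := ∫ t in Ioi (0:ℝ), (φ t) ^ 2 with hNdef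
  set Q := ∫ t in Ioi (0:ℝ), ((deriv φ t) ^ 2 + (t - ξ) ^ 2 * (φ t) ^ 2) with hQdef
  have hQN : Q < lam * N := by
    rw [RQ] at hrlt
    rw [div_lt_iff₀ hN] at hrlt
    linarith [hrlt]
  set P := ∫ t in Ioi (0:ℝ), (φ t) ^ 4 with hPdef
  have hP0 : 0 ≤ P := setIntegral_nonneg measurableSet_Ioi fun t _ => by positivity
  set δ : ℝ := (lam * N - Q) / (lam / 2 * P + 1) with hδdef
  have hden : 0 < lam / 2 * P + 1 := by positivity
  have hδ0 : 0 < δ := div_pos (by linarith) hden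
  set m : ℝ := min δ 1 with hmdef
  have hm0 : 0 < m := lt_min hδ0 one_pos
  set ε : ℝ := Real.sqrt m with hεdef
  have hε2 : ε ^ 2 = m := Real.sq_sqrt hm0.le
  set ψ : ℝ → ℝ := fun t => ε * φ t with hψdef
  have hψmem : MemB1 ψ := memB1_smul ε hφ
  refine ⟨ξ, ψ, hψmem, ?_⟩
  have hGLF : GLF ξ lam ψ = ε ^ 2 * Q + (ε ^ 4 * (lam / 2)) * P + (-(ε ^ 2 * lam)) * N := by
    rw [GLF]
    have h1 : Integrable (fun t => ε ^ 2 * ((deriv φ t) ^ 2 + (t - ξ) ^ 2 * (φ t) ^ 2))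
        (volume.restrict (Ioi 0)) := (hφ.int_num ξ).const_mul _
    have h2 : Integrable (fun t => (ε ^ 4 * (lam / 2)) * (φ t ^ 4))
        (volume.restrict (Ioi 0)) := (hφ.int_pow4).const_mul _
    have h3 : Integrable (fun t => (-(ε ^ 2 * lam)) * (φ t ^ 2))
        (volume.restrict (Ioi 0)) := (hφ.2.2.1).const_mul _
    have h12 : Integrable (fun t => ε ^ 2 * ((deriv φ t) ^ 2 + (t - ξ) ^ 2 * (φ t) ^ 2)
        + (ε ^ 4 * (lam / 2)) * (φ t ^ 4)) (volume.restrict (Ioi 0)) := h1.add h2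
    rw [setIntegral_congr_fun measurableSet_Ioi (show EqOn _
      (fun t => ε ^ 2 * ((deriv φ t) ^ 2 + (t - ξ) ^ 2 * (φ t) ^ 2)
        + (ε ^ 4 * (lam / 2)) * (φ t ^ 4) + (-(ε ^ 2 * lam)) * (φ t ^ 2)) (Ioi 0) from ?_)]
    · rw [integral_add h12 h3, integral_add h1 h2,
        integral_const_mul, integral_const_mul, integral_const_mul]
    · intro t ht
      have hder : deriv ψ t = ε * deriv φ t := deriv_const_mul ε (hφ.2.1 t ht)
      simp only [hψdef]
      rw [hder]
      ring
  rw [hGLF, hε2]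
  have h4 : ε ^ 4 = m ^ 2 := by rw [show (4:ℕ) = 2*2 from rfl, pow_mul, hε2]
  rw [h4]
  have hmδ : m ≤ δ := min_le_left _ _
  have hkey : δ * (lam / 2 * P + 1) = lam * N - Q := by
    rw [hδdef]; field_simp
  nlinarith [mul_le_mul_of_nonneg_right hmδ (by positivity : (0:ℝ) ≤ lam / 2 * P),
    mul_pos hm0 hm0, sq_nonneg m]

/-- at a global minimum `(ζ, f)` of `(z,φ) ↦ F_{z,λ}(φ)` with
`Θ₀ < λ ≤ 1`, the moment identity `∫ (t-ζ) f² = 0` holds and `ζ > 0`. -/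
theorem moment_identity (lam ζ : ℝ) (f : ℝ → ℝ)
    (hlam0 : Theta0 < lam) (hlam1 : lam ≤ 1)
    (hmin : IsGlobalMin lam ζ f) (hfpos : ∀ t : ℝ, 0 ≤ t → 0 ≤ f t) :
    (∫ t in Ioi (0:ℝ), (t - ζ) * (f t) ^ 2) = 0 ∧ 0 < ζ := by
  obtain ⟨hf, hmin2⟩ := hmin
  obtain ⟨z₀, ψ, hψ, hψneg⟩ := exists_GLF_neg hlam0
  have hneg : GLF ζ lam f < 0 := lt_of_le_of_lt (hmin2 z₀ ψ hψ) hψneg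
  set N := ∫ t in Ioi (0:ℝ), (f t) ^ 2 with hNdef
  set B := ∫ t in Ioi (0:ℝ), t * (f t) ^ 2 with hBdef
  have hN0 : 0 ≤ N := setIntegral_nonneg measurableSet_Ioi fun t _ => sq_nonneg _
  have hB0 : 0 ≤ B := setIntegral_nonneg measurableSet_Ioi fun t ht =>
    mul_nonneg (le_of_lt ht) (sq_nonneg _)
  -- N > 0
  have hN : 0 < N := by
    rcases lt_or_eq_of_le hN0 with h | h
    · exact h
    have hzero : (fun t => (f t) ^ 2) =ᵐ[volume.restrict (Ioi 0)] 0 := by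
      rw [← integral_eq_zero_iff_of_nonneg_ae (ae_of_all _ fun t => sq_nonneg (f t)) hf.2.2.1]
      exact h.symm
    have hfzero : ∀ t ∈ Ioi (0:ℝ), f t = 0 := by
      intro t₀ ht₀
      by_contra h0
      have hev : ∀ᶠ u in nhds t₀, f u ≠ 0 := ((hf.2.1 t₀ ht₀).continuousAt).eventually_ne h0
      rw [eventually_nhds_iff] at hev
      obtain ⟨U, hfU, hUopen, htU⟩ := hev
      set V := U ∩ Ioi (0:ℝ) with hVdef
      have hVpos : 0 < volume V := (hUopen.inter isOpen_Ioi).measure_pos _ ⟨t₀, htU, ht₀⟩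
      have h1 : volume.restrict (Ioi 0) {x | ¬ (f x) ^ 2 = 0} = 0 := by
        have := ae_iff.mp hzero
        simpa only [Pi.zero_apply] using this
      have h2 : volume.restrict (Ioi 0) V = 0 :=
        measure_mono_null (fun x hx => pow_ne_zero 2 (hfU x hx.1)) h1
      have h3 : volume.restrict (Ioi 0) V = volume V := by
        rw [Measure.restrict_apply' measurableSet_Ioi,
          Set.inter_eq_self_of_subset_left Set.inter_subset_right]
      rw [h3] at h2
      exact absurd h2 hVpos.ne'
    have hdzero : ∀ t ∈ Ioi (0:ℝ), deriv f t = 0 := by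
      intro t ht
      have hev : f =ᶠ[nhds t] (fun _ => (0:ℝ)) :=
        Filter.eventually_of_mem (isOpen_Ioi.mem_nhds ht) hfzero
      rw [hev.deriv_eq]
      simp
    have : GLF ζ lam f = 0 := by
      rw [GLF, setIntegral_congr_fun measurableSet_Ioi
        (show EqOn (fun t : ℝ => (deriv f t) ^ 2 + (t - ζ) ^ 2 * (f t) ^ 2
            + lam / 2 * (f t) ^ 4 - lam * (f t) ^ 2) (fun _ => (0:ℝ)) (Ioi 0) from fun t ht => by
          simp [hfzero t ht, hdzero t ht]), integral_zero]
    linarith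
  -- integrability of the full integrand at ζ
  have hIa : Integrable (fun t => (deriv f t) ^ 2 + (t - ζ) ^ 2 * (f t) ^ 2)
      (volume.restrict (Ioi 0)) := hf.int_num ζ
  have hIb : Integrable (fun t => lam / 2 * (f t) ^ 4) (volume.restrict (Ioi 0)) :=
    (hf.int_pow4).const_mul _
  have hIc : Integrable (fun t => lam * (f t) ^ 2) (volume.restrict (Ioi 0)) :=
    (hf.2.2.1).const_mul _
  have hIab : Integrable (fun t => ((deriv f t) ^ 2 + (t - ζ) ^ 2 * (f t) ^ 2)
      + lam / 2 * (f t) ^ 4) (volume.restrict (Ioi 0)) := hIa.add hIb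
  have hG : Integrable (fun t => (((deriv f t) ^ 2 + (t - ζ) ^ 2 * (f t) ^ 2)
      + lam / 2 * (f t) ^ 4) - lam * (f t) ^ 2) (volume.restrict (Ioi 0)) := hIab.sub hIc
  set C := B - ζ * N with hCdef
  have hquad : ∀ s : ℝ, 0 ≤ 2 * s * C + s ^ 2 * N := by
    intro s
    have hle := hmin2 (ζ - s) f hf
    have hJa : Integrable (fun t => (2 * s) * (t * (f t) ^ 2)) (volume.restrict (Ioi 0)) :=
      hf.int_t_sq.const_mul _
    have hJb : Integrable (fun t => (s ^ 2 - 2 * s * ζ) * ((f t) ^ 2)) (volume.restrict (Ioi 0)) :=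
      (hf.2.2.1).const_mul _
    have hJ : Integrable (fun t => (2 * s) * (t * (f t) ^ 2) + (s ^ 2 - 2 * s * ζ) * ((f t) ^ 2))
        (volume.restrict (Ioi 0)) := hJa.add hJb
    have hfun : (fun t => (deriv f t) ^ 2 + (t - (ζ - s)) ^ 2 * (f t) ^ 2
          + lam / 2 * (f t) ^ 4 - lam * (f t) ^ 2)
        = fun t => ((((deriv f t) ^ 2 + (t - ζ) ^ 2 * (f t) ^ 2) + lam / 2 * (f t) ^ 4)
            - lam * (f t) ^ 2)
          + ((2 * s) * (t * (f t) ^ 2) + (s ^ 2 - 2 * s * ζ) * ((f t) ^ 2)) :=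
      funext fun t => by ring
    have hGLFζ : GLF ζ lam f = ∫ t in Ioi (0:ℝ),
        ((((deriv f t) ^ 2 + (t - ζ) ^ 2 * (f t) ^ 2) + lam / 2 * (f t) ^ 4)
          - lam * (f t) ^ 2) := by
      rw [GLF]
    have hexp : GLF (ζ - s) lam f = GLF ζ lam f + ((2 * s) * B + (s ^ 2 - 2 * s * ζ) * N) := by
      rw [GLF, hfun, integral_add hG hJ, integral_add hJa hJb,
        integral_const_mul, integral_const_mul, hGLFζ]
    rw [hexp] at hle
    have : 0 ≤ (2 * s) * B + (s ^ 2 - 2 * s * ζ) * N := by linarith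
    rw [hCdef]
    nlinarith [this]
  have hC : C = 0 := by
    have hs := hquad (-(C / N))
    have heq : 2 * (-(C / N)) * C + (-(C / N)) ^ 2 * N = -(C ^ 2) / N := by
      field_simp
      ring
    rw [heq] at hs
    have hCsq : C ^ 2 ≤ 0 := by
      by_contra hpos
      push_neg at hpos
      have : -(C ^ 2) / N < 0 := div_neg_of_neg_of_pos (by linarith) hN
      linarith
    have : C ^ 2 = 0 := le_antisymm hCsq (sq_nonneg C)
    exact sq_eq_zero_iff.mp this
  constructor
  · have hfun : (fun t => (t - ζ) * (f t) ^ 2)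
        = fun t => t * (f t) ^ 2 - ζ * ((f t) ^ 2) := funext fun t => by ring
    rw [hfun, integral_sub hf.int_t_sq ((hf.2.2.1).const_mul ζ), integral_const_mul]
    rw [hCdef] at hC
    linarith
  · -- ζ > 0
    have hBζ : B = ζ * N := by rw [hCdef] at hC; linarith
    have hBpos : 0 < B := by
      rcases lt_or_eq_of_le hB0 with h | h
      · exact h
      exfalso
      have hnn : 0 ≤ᵐ[volume.restrict (Ioi 0)] (fun t => t * (f t) ^ 2) :=
        (ae_restrict_iff' measurableSet_Ioi).2
          (ae_of_all _ fun t ht => mul_nonneg (le_of_lt ht) (sq_nonneg _))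
      have hae : (fun t => t * (f t) ^ 2) =ᵐ[volume.restrict (Ioi 0)] 0 := by
        rw [← integral_eq_zero_iff_of_nonneg_ae hnn hf.int_t_sq]
        exact h.symm
      have hfae : (fun t => (f t) ^ 2) =ᵐ[volume.restrict (Ioi 0)] 0 := by
        filter_upwards [hae, ae_restrict_mem measurableSet_Ioi] with t h1 h2
        have : t * (f t) ^ 2 = 0 := h1
        rcases mul_eq_zero.mp this with h' | h'
        · exact absurd h' (ne_of_gt h2)
        · exact h'
      have : N = 0 := by
        rw [hNdef, integral_congr_ae hfae]
        simp
      linarith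
    by_contra hζ
    push_neg at hζ
    nlinarith [hN, hBpos, hBζ]
end
end

section
/- Let Θ₀ ≤ λ ≤ 1 and suppose the map (z,φ) ↦ F_{z,λ}(φ) on ℝ × B¹(ℝ⁺) attains its global minimum at (ζ, f) with f nonnegative. Then the following virial-type identities hold: (1) ‖f′‖₂² − ‖(t−ζ)f‖₂² + (λ/4)‖f‖₄⁴ = 0; (2) 2‖f′‖₂² + (5λ/4)‖f‖₄⁴ = λ‖f‖₂²; (3) 2‖(t−ζ)f‖₂² + (3λ/4)‖f‖₄⁴ = λ‖f‖₂². Here ‖·‖_p denotes the L^p((0,∞)) norm and (t−ζ)f denotes the function t ↦ (t−ζ)f(t). -/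
open MeasureTheory Set Real Filter

noncomputable section

lemma contOn {f : ℝ → ℝ} (hf : MemB1 f) : ContinuousOn f (Ioi 0) :=
  fun t ht => (hf.2.1 t ht).continuousAt.continuousWithinAt

lemma aesm {f : ℝ → ℝ} (hf : MemB1 f) :
    AEStronglyMeasurable f (volume.restrict (Ioi 0)) :=
  (contOn hf).aestronglyMeasurable measurableSet_Ioi

lemma integrable_ff' {f : ℝ → ℝ} (hf : MemB1 f) :
    IntegrableOn (fun t => 2 * f t * deriv f t) (Ioi 0) := by
  have hg : IntegrableOn (fun t => (f t)^2 + (deriv f t)^2) (Ioi 0) :=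
    hf.2.2.1.add hf.2.2.2.1
  have hm : AEStronglyMeasurable (fun t => 2 * f t * deriv f t) (volume.restrict (Ioi 0)) :=
    ((aesm hf).const_mul 2).mul (measurable_deriv f).aestronglyMeasurable
  have hb : ∀ᵐ t ∂(volume.restrict (Ioi 0)),
      ‖2 * f t * deriv f t‖ ≤ (f t)^2 + (deriv f t)^2 := by
    refine Eventually.of_forall fun t => ?_
    rw [Real.norm_eq_abs, abs_mul, abs_mul]
    nlinarith [abs_nonneg (f t), abs_nonneg (deriv f t), sq_abs (f t),
      sq_abs (deriv f t), sq_nonneg (|f t| - |deriv f t|),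
      abs_of_nonneg (show (0:ℝ) ≤ 2 by norm_num)]
  exact Integrable.mono' hg hm hb

lemma sq_bound {f : ℝ → ℝ} (hf : MemB1 f) :
    ∃ M : ℝ, 0 ≤ M ∧ ∀ t ∈ Ioi (0:ℝ), (f t)^2 ≤ M := by
  have hff' := integrable_ff' hf
  set I := ∫ t in Ioi (0:ℝ), |2 * f t * deriv f t| with hI
  have hI0 : 0 ≤ I := setIntegral_nonneg measurableSet_Ioi fun t _ => abs_nonneg _
  refine ⟨(f 1)^2 + I, by positivity, fun b hb => ?_⟩
  have hb0 : (0:ℝ) < b := hb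
  have hsub : uIcc b 1 ⊆ Ioi 0 := by
    intro x hx
    have := hx.1
    rcases le_total b 1 with h | h
    · rw [uIcc_of_le h] at hx; exact lt_of_lt_of_le hb0 hx.1
    · rw [uIcc_of_ge h] at hx; exact lt_of_lt_of_le one_pos hx.1
  have hderiv : ∀ x ∈ uIcc b 1, HasDerivAt (fun t => (f t)^2) (2 * f x * deriv f x) x := by
    intro x hx
    have hd : HasDerivAt f (deriv f x) x := (hf.2.1 x (hsub hx)).hasDerivAt
    have := hd.pow 2
    simpa [mul_comm, mul_assoc, mul_left_comm, Pi.pow_def] using this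
  have hint : IntervalIntegrable (fun x => 2 * f x * deriv f x) volume b 1 := by
    rw [intervalIntegrable_iff]
    exact hff'.mono_set (Set.uIoc_subset_uIcc.trans hsub)
  have key : ∫ x in b..(1:ℝ), 2 * f x * deriv f x = (f 1)^2 - (f b)^2 :=
    intervalIntegral.integral_eq_sub_of_hasDerivAt hderiv hint
  have habs : |∫ x in b..(1:ℝ), 2 * f x * deriv f x| ≤ I := by
    have h1 : ‖∫ x in b..(1:ℝ), 2 * f x * deriv f x‖
        ≤ ∫ x in Set.uIoc b 1, ‖2 * f x * deriv f x‖ :=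
      intervalIntegral.norm_integral_le_integral_norm_uIoc
    have h2 : ∫ x in Set.uIoc b 1, ‖2 * f x * deriv f x‖ ≤ I := by
      rw [hI]
      refine setIntegral_mono_set hff'.abs ?_ ?_
      · exact Eventually.of_forall fun t => abs_nonneg _
      · exact HasSubset.Subset.eventuallyLE (Set.uIoc_subset_uIcc.trans hsub)
    calc |∫ x in b..(1:ℝ), 2 * f x * deriv f x| = ‖∫ x in b..(1:ℝ), 2 * f x * deriv f x‖ := (Real.norm_eq_abs _).symm
    _ ≤ ∫ x in Set.uIoc b 1, ‖2 * f x * deriv f x‖ := h1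
    _ ≤ I := h2
  have := abs_le.mp habs
  rw [key] at this
  nlinarith [this.1, this.2]

lemma integrable_pow4 {f : ℝ → ℝ} (hf : MemB1 f) :
    IntegrableOn (fun t => (f t) ^ 4) (Ioi 0) := by
  obtain ⟨M, hM0, hM⟩ := sq_bound hf
  have hg : IntegrableOn (fun t => M * (f t)^2) (Ioi 0) := hf.2.2.1.const_mul M
  have hm : AEStronglyMeasurable (fun t => (f t)^4) (volume.restrict (Ioi 0)) :=
    (aesm hf).pow 4
  refine Integrable.mono' hg hm ?_
  rw [ae_restrict_iff' measurableSet_Ioi]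
  refine Eventually.of_forall fun t ht => ?_
  have h1 := hM t ht
  have h2 : (0:ℝ) ≤ (f t)^2 := sq_nonneg _
  have : (f t)^4 = (f t)^2 * (f t)^2 := by ring
  rw [Real.norm_eq_abs, abs_of_nonneg (by positivity : (0:ℝ) ≤ (f t)^4), this]
  nlinarith

lemma integrable_sub_sq {f : ℝ → ℝ} (hf : MemB1 f) (z : ℝ) :
    IntegrableOn (fun t => (t - z)^2 * (f t)^2) (Ioi 0) := by
  have hg : IntegrableOn (fun t => 2 * (t * f t)^2 + 2 * z^2 * (f t)^2) (Ioi 0) :=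
    (hf.2.2.2.2.const_mul 2).add (hf.2.2.1.const_mul (2 * z^2))
  have hm : AEStronglyMeasurable (fun t => (t - z)^2 * (f t)^2) (volume.restrict (Ioi 0)) := by
    exact (((aestronglyMeasurable_id.sub aestronglyMeasurable_const).pow 2)).mul ((aesm hf).pow 2)
  refine Integrable.mono' hg hm ?_
  refine Eventually.of_forall fun t => ?_
  rw [Real.norm_eq_abs, abs_of_nonneg (by positivity)]
  nlinarith [sq_nonneg (f t), sq_nonneg (t + z), sq_nonneg (t - z), sq_nonneg t, sq_nonneg z,
    mul_nonneg (sq_nonneg (t+z)) (sq_nonneg (f t))]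

lemma deriv_scale {f : ℝ → ℝ} (hf : MemB1 f) (c : ℝ) {s : ℝ} (hs : 0 < s)
    {t : ℝ} (ht : t ∈ Ioi (0:ℝ)) :
    deriv (fun t => c * f (s * t)) t = c * (s * deriv f (s * t)) := by
  have hst : s * t ∈ Ioi (0:ℝ) := mul_pos hs ht
  have hd : HasDerivAt f (deriv f (s * t)) (s * t) := (hf.2.1 _ hst).hasDerivAt
  have hlin : HasDerivAt (fun t : ℝ => s * t) s t := by
    simpa using (hasDerivAt_id t).const_mul s
  have := (hd.comp t hlin).const_mul c
  simpa [mul_comm, mul_assoc, mul_left_comm] using this.deriv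

lemma memB1_scale {f : ℝ → ℝ} (hf : MemB1 f) (c : ℝ) {s : ℝ} (hs : 0 < s) :
    MemB1 (fun t => c * f (s * t)) := by
  refine ⟨?_, ?_, ?_, ?_, ?_⟩
  · have h1 : ContinuousWithinAt (fun t : ℝ => s * t) (Ici 0) 0 :=
      (continuous_const.mul continuous_id).continuousWithinAt
    have h2 : MapsTo (fun t : ℝ => s * t) (Ici 0) (Ici 0) := fun x hx =>
      mul_nonneg hs.le hx
    have h0 : ContinuousWithinAt f (Ici 0) ((fun t : ℝ => s * t) 0) := by
      simpa using hf.1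
    have := (h0.comp h1 h2).const_smul c
    simpa [smul_eq_mul, Pi.smul_def, Function.comp_def] using this
  · intro t ht
    have hst : s * t ∈ Ioi (0:ℝ) := mul_pos hs ht
    have hlin : DifferentiableAt ℝ (fun t : ℝ => s * t) t := by fun_prop
    exact ((hf.2.1 _ hst).comp t hlin).const_mul c
  · have : IntegrableOn (fun t => c^2 * (f t)^2) (Ioi 0) := hf.2.2.1.const_mul _
    have h := (integrableOn_Ioi_comp_mul_left_iff (fun t => c^2 * (f t)^2) 0 hs).2
      (by simpa using this)
    refine (h.congr_fun (fun t ht => by ring) measurableSet_Ioi)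
  · have : IntegrableOn (fun t => c^2 * s^2 * (deriv f t)^2) (Ioi 0) := hf.2.2.2.1.const_mul _
    have h := (integrableOn_Ioi_comp_mul_left_iff (fun t => c^2 * s^2 * (deriv f t)^2) 0 hs).2
      (by simpa using this)
    refine (h.congr_fun (fun t ht => ?_) measurableSet_Ioi)
    rw [deriv_scale hf c hs ht]; ring
  · have : IntegrableOn (fun t => c^2 / s^2 * (t * f t)^2) (Ioi 0) := hf.2.2.2.2.const_mul _
    have h := (integrableOn_Ioi_comp_mul_left_iff (fun t => c^2 / s^2 * (t * f t)^2) 0 hs).2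
      (by simpa using this)
    refine (h.congr_fun (fun t ht => ?_) measurableSet_Ioi)
    field_simp

lemma GLF_scale {f : ℝ → ℝ} (hf : MemB1 f) (lam ζ c : ℝ) {s : ℝ} (hs : 0 < s) :
    GLF (ζ / s) lam (fun t => c * f (s * t))
      = s⁻¹ * (c^2 * s^2 * (∫ t in Ioi (0:ℝ), (deriv f t) ^ 2)
        + c^2 / s^2 * (∫ t in Ioi (0:ℝ), (t - ζ) ^ 2 * (f t) ^ 2)
        + lam / 2 * c^4 * (∫ t in Ioi (0:ℝ), (f t) ^ 4)
        - lam * c^2 * (∫ t in Ioi (0:ℝ), (f t) ^ 2)) := by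
  set G : ℝ → ℝ := fun u => c^2 * s^2 * (deriv f u)^2 + c^2 / s^2 * ((u - ζ)^2 * (f u)^2)
    + lam / 2 * c^4 * (f u)^4 - lam * c^2 * (f u)^2 with hG
  have step1 : GLF (ζ / s) lam (fun t => c * f (s * t)) = ∫ t in Ioi (0:ℝ), G (s * t) := by
    refine setIntegral_congr_fun measurableSet_Ioi fun t ht => ?_
    simp only [hG]
    rw [deriv_scale hf c hs ht]
    have hs' : s ≠ 0 := hs.ne'
    field_simp
  have step2 : (∫ t in Ioi (0:ℝ), G (s * t)) = s⁻¹ * ∫ u in Ioi (0:ℝ), G u := by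
    have := integral_comp_mul_left_Ioi G 0 hs
    simpa [smul_eq_mul] using this
  have i1 : IntegrableOn (fun u => c^2 * s^2 * (deriv f u)^2) (Ioi 0) :=
    hf.2.2.2.1.const_mul _
  have i2 : IntegrableOn (fun u => c^2 / s^2 * ((u - ζ)^2 * (f u)^2)) (Ioi 0) :=
    (integrable_sub_sq hf ζ).const_mul _
  have i3 : IntegrableOn (fun u => lam / 2 * c^4 * (f u)^4) (Ioi 0) :=
    (integrable_pow4 hf).const_mul _
  have i4 : IntegrableOn (fun u => lam * c^2 * (f u)^2) (Ioi 0) :=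
    hf.2.2.1.const_mul _
  have step3 : (∫ u in Ioi (0:ℝ), G u)
      = c^2 * s^2 * (∫ t in Ioi (0:ℝ), (deriv f t) ^ 2)
        + c^2 / s^2 * (∫ t in Ioi (0:ℝ), (t - ζ) ^ 2 * (f t) ^ 2)
        + lam / 2 * c^4 * (∫ t in Ioi (0:ℝ), (f t) ^ 4)
        - lam * c^2 * (∫ t in Ioi (0:ℝ), (f t) ^ 2) := by
    have i12 : IntegrableOn (fun u => c^2 * s^2 * (deriv f u)^2
        + c^2 / s^2 * ((u - ζ)^2 * (f u)^2)) (Ioi 0) := i1.add i2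
    have i123 : IntegrableOn (fun u => c^2 * s^2 * (deriv f u)^2
        + c^2 / s^2 * ((u - ζ)^2 * (f u)^2) + lam / 2 * c^4 * (f u)^4) (Ioi 0) := i12.add i3
    simp only [hG]
    rw [integral_sub i123 i4, integral_add i12 i3, integral_add i1 i2,
      integral_const_mul, integral_const_mul, integral_const_mul, integral_const_mul]
  rw [step1, step2, step3]

/-- virial-type identities at a global minimum `(ζ, f)` of
`(z,φ) ↦ F_{z,λ}(φ)` for `Θ₀ ≤ λ ≤ 1`. -/
theorem virial_identities (lam ζ : ℝ) (f : ℝ → ℝ)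
    (hlam0 : Theta0 ≤ lam) (hlam1 : lam ≤ 1)
    (hmin : IsGlobalMin lam ζ f) (hfpos : ∀ t : ℝ, 0 ≤ t → 0 ≤ f t) :
    ((∫ t in Ioi (0:ℝ), (deriv f t) ^ 2) - (∫ t in Ioi (0:ℝ), (t - ζ) ^ 2 * (f t) ^ 2)
        + lam / 4 * (∫ t in Ioi (0:ℝ), (f t) ^ 4) = 0) ∧
    (2 * (∫ t in Ioi (0:ℝ), (deriv f t) ^ 2)
        + 5 * lam / 4 * (∫ t in Ioi (0:ℝ), (f t) ^ 4)
        = lam * ∫ t in Ioi (0:ℝ), (f t) ^ 2) ∧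
    (2 * (∫ t in Ioi (0:ℝ), (t - ζ) ^ 2 * (f t) ^ 2)
        + 3 * lam / 4 * (∫ t in Ioi (0:ℝ), (f t) ^ 4)
        = lam * ∫ t in Ioi (0:ℝ), (f t) ^ 2) := by
  obtain ⟨hf, hle⟩ := hmin
  set A := ∫ t in Ioi (0:ℝ), (deriv f t) ^ 2 with hA
  set B := ∫ t in Ioi (0:ℝ), (t - ζ) ^ 2 * (f t) ^ 2 with hB
  set C := ∫ t in Ioi (0:ℝ), (f t) ^ 4 with hC
  set D := ∫ t in Ioi (0:ℝ), (f t) ^ 2 with hD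
  have hid : (fun t => (1:ℝ) * f (1 * t)) = f := by funext t; simp
  have hbase : GLF ζ lam f = A + B + lam / 2 * C - lam * D := by
    have h := GLF_scale hf lam ζ 1 one_pos
    rw [div_one, hid] at h
    rw [h, ← hA, ← hB, ← hC, ← hD]; ring
  -- c-scaling Euler-Lagrange equation
  set p : ℝ → ℝ := fun c => (A + B - lam * D) * c ^ 2 + lam / 2 * C * c ^ 4 with hp
  have hp1 : p 1 = A + B + lam / 2 * C - lam * D := by simp [hp]; ring
  have hpc : ∀ c : ℝ, p 1 ≤ p c := by
    intro c
    have hmem := memB1_scale hf c one_pos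
    have h := hle ζ _ hmem
    have hsc := GLF_scale hf lam ζ c one_pos
    rw [div_one] at hsc
    rw [hbase, hsc, ← hA, ← hB, ← hC, ← hD] at h
    rw [hp1]
    calc A + B + lam / 2 * C - lam * D ≤ _ := h
    _ = p c := by rw [hp]; ring
  have hplm : IsLocalMin p 1 := Eventually.of_forall hpc
  have hpd : HasDerivAt p ((A + B - lam * D) * (2 * 1 ^ 1) + lam / 2 * C * (4 * 1 ^ 3)) 1 := by
    have h1 : HasDerivAt (fun c : ℝ => c ^ 2) ((2:ℕ) * 1 ^ 1) 1 := by
      simpa using hasDerivAt_pow 2 (1:ℝ)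
    have h2 : HasDerivAt (fun c : ℝ => c ^ 4) ((4:ℕ) * 1 ^ 3) 1 := by
      simpa using hasDerivAt_pow 4 (1:ℝ)
    have := (h1.const_mul (A + B - lam * D)).add (h2.const_mul (lam / 2 * C))
    simpa [hp, Pi.add_def] using this
  have E1 : A + B + lam * C - lam * D = 0 := by
    have h0 := hplm.hasDerivAt_eq_zero hpd
    nlinarith [h0]
  -- s-scaling Euler-Lagrange equation
  set q : ℝ → ℝ := fun s => A * s + B * (s⁻¹) ^ 3 + (lam / 2 * C - lam * D) * s⁻¹ with hq
  have hq1 : q 1 = A + B + lam / 2 * C - lam * D := by simp [hq]; ring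
  have hqs : ∀ s : ℝ, s ∈ Ioi (0:ℝ) → q 1 ≤ q s := by
    intro s hs
    have hs0 : (0:ℝ) < s := hs
    have hmem := memB1_scale hf 1 hs0
    have h := hle (ζ / s) _ hmem
    have hsc := GLF_scale hf lam ζ 1 hs0
    rw [hbase, hsc, ← hA, ← hB, ← hC, ← hD] at h
    rw [hq1]
    calc A + B + lam / 2 * C - lam * D ≤ _ := h
    _ = q s := by rw [hq]; field_simp; ring
  have hqlm : IsLocalMin q 1 := by
    filter_upwards [Ioi_mem_nhds (show (0:ℝ) < 1 by norm_num)] with s hs using hqs s hs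
  have hqd : HasDerivAt q (A * 1 + B * ((3:ℕ) * ((1:ℝ)⁻¹) ^ 2 * (-(((1:ℝ) ^ 2)⁻¹)))
      + (lam / 2 * C - lam * D) * (-(((1:ℝ) ^ 2)⁻¹))) 1 := by
    have h1 : HasDerivAt (fun s : ℝ => s) (1:ℝ) 1 := hasDerivAt_id 1
    have h2 : HasDerivAt (fun s : ℝ => s⁻¹) (-(((1:ℝ) ^ 2)⁻¹)) 1 := hasDerivAt_inv one_ne_zero
    have h3 : HasDerivAt (fun s : ℝ => (s⁻¹) ^ 3)
        ((3:ℕ) * ((1:ℝ)⁻¹) ^ 2 * (-(((1:ℝ) ^ 2)⁻¹))) 1 := by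
      simpa [Pi.pow_def] using h2.pow 3
    have := ((h1.const_mul A).add (h3.const_mul B)).add (h2.const_mul (lam / 2 * C - lam * D))
    simpa [hq, Pi.add_def] using this
  have E2 : A - 3 * B - lam / 2 * C + lam * D = 0 := by
    have h0 := hqlm.hasDerivAt_eq_zero hqd
    norm_num at h0
    linarith
  refine ⟨by linear_combination E1 / 2 + E2 / 2,
    by linear_combination 3 / 2 * E1 + E2 / 2,
    by linear_combination E1 / 2 - E2 / 2⟩
end
end

section
/- Let Θ₀ < λ ≤ 1 and suppose the map (z,φ) ↦ F_{z,λ}(φ) on ℝ × B¹(ℝ⁺) attains its global minimum at (ζ, f) with f nonnegative. Then (λ − Θ₀)/‖u₁‖₄² ≤ λ‖f‖₄² ≤ (3/2)·ζ^{1/2}·(λ − μ₁(ζ)), where ‖·‖₄ denotes the L⁴((0,∞)) norm. -/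
open MeasureTheory Set Real Filter

noncomputable section

/-! ### Auxiliary lemmas -/

lemma aesm_of_diff {φ : ℝ → ℝ} (h : ∀ t ∈ Ioi (0:ℝ), DifferentiableAt ℝ φ t) :
    AEStronglyMeasurable φ (volume.restrict (Ioi (0:ℝ))) := by
  have : ContinuousOn φ (Ioi 0) := fun t ht => (h t ht).continuousAt.continuousWithinAt
  exact this.aestronglyMeasurable measurableSet_Ioi

lemma integrable_mul_of_sq {g h : ℝ → ℝ} {μ : Measure ℝ}
    (hg : AEStronglyMeasurable g μ) (hh : AEStronglyMeasurable h μ)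
    (hg2 : Integrable (fun t => g t ^ 2) μ) (hh2 : Integrable (fun t => h t ^ 2) μ) :
    Integrable (fun t => g t * h t) μ := by
  refine Integrable.mono' ((hg2.add hh2).div_const 2) (hg.mul hh) ?_
  refine ae_of_all _ (fun t => ?_)
  have : |g t| * |h t| ≤ (g t ^ 2 + h t ^ 2) / 2 := by
    nlinarith [sq_nonneg (|g t| - |h t|), sq_abs (g t), sq_abs (h t)]
  simpa [Real.norm_eq_abs, abs_mul] using this

/-- elementary integral Cauchy-Schwarz -/
lemma integral_cs {g h : ℝ → ℝ} {μ : Measure ℝ}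
    (hg : AEStronglyMeasurable g μ) (hh : AEStronglyMeasurable h μ)
    (hg2 : Integrable (fun t => g t ^ 2) μ) (hh2 : Integrable (fun t => h t ^ 2) μ) :
    ∫ t, g t * h t ∂μ ≤ Real.sqrt (∫ t, g t ^ 2 ∂μ) * Real.sqrt (∫ t, h t ^ 2 ∂μ) := by
  have hmul := integrable_mul_of_sq hg hh hg2 hh2
  set G := ∫ t, g t ^ 2 ∂μ with hG
  set H := ∫ t, h t ^ 2 ∂μ with hH
  set I := ∫ t, g t * h t ∂μ with hI
  have hG0 : 0 ≤ G := integral_nonneg (fun t => sq_nonneg _)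
  have hH0 : 0 ≤ H := integral_nonneg (fun t => sq_nonneg _)
  have key : ∀ ε : ℝ, 0 < ε → I ≤ (ε * G + H / ε) / 2 := by
    intro ε hε
    have hb : ∀ t, g t * h t ≤ (ε * g t ^ 2 + h t ^ 2 / ε) / 2 := by
      intro t
      have h1 : h t ^ 2 / ε * ε = h t ^ 2 := div_mul_cancel₀ _ hε.ne'
      nlinarith [sq_nonneg (ε * g t - h t), sq_nonneg (g t * ε - h t), hε]
    calc I ≤ ∫ t, (ε * g t ^ 2 + h t ^ 2 / ε) / 2 ∂μ := by
          refine integral_mono hmul ?_ hb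
          exact (((hg2.const_mul ε).add (hh2.div_const ε)).div_const 2)
      _ = (ε * G + H / ε) / 2 := by
          rw [integral_div, integral_add (hg2.const_mul ε) (hh2.div_const ε),
            integral_const_mul, integral_div]
  rcases eq_or_lt_of_le hH0 with hHz | hHpos
  · have : I ≤ 0 := by
      refine le_of_forall_pos_le_add (fun δ hδ => ?_)
      have hε : (0:ℝ) < 2 * δ / (G + 1) := by positivity
      calc I ≤ (2 * δ / (G + 1) * G + H / (2 * δ / (G + 1))) / 2 := key _ hε
        _ = δ * (G / (G + 1)) := by rw [← hHz]; field_simp; ring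
        _ ≤ δ * 1 := by
            refine mul_le_mul_of_nonneg_left ?_ hδ.le
            rw [div_le_one (by linarith)]; linarith
        _ = 0 + δ := by ring
    calc I ≤ 0 := this
      _ ≤ _ := by positivity
  · rcases eq_or_lt_of_le hG0 with hGz | hGpos
    · have : I ≤ 0 := by
        refine le_of_forall_pos_le_add (fun δ hδ => ?_)
        have hε : (0:ℝ) < H / (2 * δ) := by positivity
        calc I ≤ (H / (2 * δ) * G + H / (H / (2 * δ))) / 2 := key _ hε
          _ = δ := by rw [← hGz]; field_simp; ring
          _ = 0 + δ := by ring
      calc I ≤ 0 := this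
        _ ≤ _ := by positivity
    · have hsG : (0:ℝ) < Real.sqrt G := Real.sqrt_pos.2 hGpos
      have hsH : (0:ℝ) < Real.sqrt H := Real.sqrt_pos.2 hHpos
      have hε : (0:ℝ) < Real.sqrt H / Real.sqrt G := by positivity
      have e1 : Real.sqrt H / Real.sqrt G * G = Real.sqrt H * Real.sqrt G := by
        rw [div_mul_eq_mul_div, mul_div_assoc, Real.div_sqrt]
      have e2 : H / (Real.sqrt H / Real.sqrt G) = Real.sqrt H * Real.sqrt G := by
        rw [div_div_eq_mul_div, mul_div_right_comm, Real.div_sqrt]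
      calc I ≤ (Real.sqrt H / Real.sqrt G * G + H / (Real.sqrt H / Real.sqrt G)) / 2 := key _ hε
        _ = Real.sqrt G * Real.sqrt H := by rw [e1, e2]; ring

namespace MemB1
variable {φ : ℝ → ℝ}

lemma contOn_s12 (h : MemB1 φ) : ContinuousOn φ (Ici 0) := by
  intro x hx
  rcases eq_or_lt_of_le (mem_Ici.1 hx) with hx0 | hxpos
  · exact hx0 ▸ h.1
  · exact ((h.2.1 x hxpos).continuousAt).continuousWithinAt

lemma aesm (h : MemB1 φ) : AEStronglyMeasurable φ (volume.restrict (Ioi (0:ℝ))) :=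
  aesm_of_diff h.2.1

lemma int_mul_deriv (h : MemB1 φ) : IntegrableOn (fun t => φ t * deriv φ t) (Ioi 0) :=
  integrable_mul_of_sq h.aesm ((measurable_deriv φ).aestronglyMeasurable) h.2.2.1 h.2.2.2.1

lemma sq_bound (h : MemB1 φ) : ∃ M : ℝ, 0 ≤ M ∧ ∀ t ∈ Ici (0:ℝ), φ t ^ 2 ≤ M := by
  set J := ∫ t in Ioi (0:ℝ), |2 * (φ t * deriv φ t)| with hJ
  have hJ0 : 0 ≤ J := integral_nonneg fun t => abs_nonneg _
  have hJint : IntegrableOn (fun t => |2 * (φ t * deriv φ t)|) (Ioi 0) :=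
    (h.int_mul_deriv.const_mul 2).abs
  refine ⟨φ 0 ^ 2 + J, by positivity, fun x hx => ?_⟩
  rcases eq_or_lt_of_le (mem_Ici.1 hx) with hx0 | hxpos
  · simp [← hx0]; linarith
  have hcont : ContinuousOn (fun t => φ t ^ 2) (Icc 0 x) :=
    (h.contOn_s12.mono Icc_subset_Ici_self).pow 2
  have hderiv : ∀ t ∈ Ioo (0:ℝ) x, HasDerivAt (fun t => φ t ^ 2)
      (2 * (φ t * deriv φ t)) t := by
    intro t ht
    have hd : HasDerivAt φ (deriv φ t) t := (h.2.1 t ht.1).hasDerivAt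
    have := hd.fun_pow 2
    simpa [mul_comm, mul_assoc, mul_left_comm] using this
  have hii : IntervalIntegrable (fun t => 2 * (φ t * deriv φ t)) volume 0 x := by
    rw [intervalIntegrable_iff_integrableOn_Ioc_of_le hxpos.le]
    have h2 : IntegrableOn (fun t => 2 * (φ t * deriv φ t)) (Ioi 0) volume :=
      h.int_mul_deriv.const_mul 2
    exact h2.mono_set Ioc_subset_Ioi_self
  have hftc := intervalIntegral.integral_eq_sub_of_hasDerivAt_of_le hxpos.le hcont hderiv hii
  have h1 : ∫ t in (0:ℝ)..x, 2 * (φ t * deriv φ t) ≤ J := by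
    calc ∫ t in (0:ℝ)..x, 2 * (φ t * deriv φ t)
        ≤ ∫ t in (0:ℝ)..x, |2 * (φ t * deriv φ t)| := by
          refine intervalIntegral.integral_mono_on hxpos.le hii ?_ (fun t _ => le_abs_self _)
          rw [intervalIntegrable_iff_integrableOn_Ioc_of_le hxpos.le]
          exact hJint.mono_set Ioc_subset_Ioi_self
      _ ≤ J := by
          rw [intervalIntegral.integral_of_le hxpos.le]
          exact setIntegral_mono_set hJint (ae_of_all _ fun t => abs_nonneg _)
            (HasSubset.Subset.eventuallyLE Ioc_subset_Ioi_self)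
  linarith [hftc ▸ h1]

lemma int4 (h : MemB1 φ) : IntegrableOn (fun t => φ t ^ 4) (Ioi 0) := by
  obtain ⟨M, hM0, hM⟩ := h.sq_bound
  refine Integrable.mono' (h.2.2.1.const_mul M) ((h.aesm.pow 4)) ?_
  rw [ae_restrict_iff' measurableSet_Ioi]
  refine ae_of_all _ fun t ht => ?_
  have h1 : φ t ^ 2 ≤ M := hM t (Ioi_subset_Ici_self ht)
  have h2 : (0:ℝ) ≤ φ t ^ 2 := sq_nonneg _
  have h3 : φ t ^ 4 = φ t ^ 2 * φ t ^ 2 := by ring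
  rw [Real.norm_eq_abs, abs_of_nonneg (by positivity), h3]
  nlinarith

lemma int_t_sq_s12 (h : MemB1 φ) : IntegrableOn (fun t => t * φ t ^ 2) (Ioi 0) := by
  have haesm : AEStronglyMeasurable (fun t : ℝ => t * φ t) (volume.restrict (Ioi 0)) :=
    aestronglyMeasurable_id.mul h.aesm
  have := integrable_mul_of_sq haesm h.aesm h.2.2.2.2 h.2.2.1
  exact this.congr (ae_of_all _ fun t => by ring)

lemma intV (h : MemB1 φ) (z : ℝ) :
    IntegrableOn (fun t => (t - z) ^ 2 * φ t ^ 2) (Ioi 0) := by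
  have h1 : IntegrableOn (fun t => (t * φ t) ^ 2 - 2 * z * (t * φ t ^ 2) + z ^ 2 * φ t ^ 2)
      (Ioi 0) := ((h.2.2.2.2.sub ((h.int_t_sq_s12).const_mul (2 * z))).add (h.2.2.1.const_mul (z ^ 2)))
  exact h1.congr (ae_of_all _ fun t => by ring)

lemma smul (h : MemB1 φ) (c : ℝ) : MemB1 (fun t => c * φ t) := by
  refine ⟨continuousWithinAt_const.mul h.1, fun t ht => (h.2.1 t ht).const_mul c,
    ?_, ?_, ?_⟩
  · exact (h.2.2.1.const_mul (c ^ 2)).congr (ae_of_all _ fun t => by ring)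
  · refine (h.2.2.2.1.const_mul (c ^ 2)).congr ?_
    rw [EventuallyEq, ae_restrict_iff' measurableSet_Ioi]
    refine ae_of_all _ fun t ht => ?_
    rw [deriv_const_mul c (h.2.1 t ht)]; ring
  · exact (h.2.2.2.2.const_mul (c ^ 2)).congr (ae_of_all _ fun t => by ring)

lemma glf_smul (h : MemB1 φ) (c z lam : ℝ) :
    GLF z lam (fun t => c * φ t) =
      c ^ 2 * ((∫ t in Ioi (0:ℝ), (deriv φ t) ^ 2) + ∫ t in Ioi (0:ℝ), (t - z) ^ 2 * φ t ^ 2)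
      + c ^ 4 * (lam / 2) * (∫ t in Ioi (0:ℝ), φ t ^ 4)
      - c ^ 2 * lam * ∫ t in Ioi (0:ℝ), φ t ^ 2 := by
  have ha : IntegrableOn (fun t => c ^ 2 * (deriv φ t) ^ 2) (Ioi 0) :=
    h.2.2.2.1.const_mul _
  have hb : IntegrableOn (fun t => c ^ 2 * ((t - z) ^ 2 * φ t ^ 2)) (Ioi 0) :=
    (h.intV z).const_mul _
  have hc : IntegrableOn (fun t => c ^ 4 * (lam / 2) * φ t ^ 4) (Ioi 0) :=
    h.int4.const_mul _
  have hd : IntegrableOn (fun t => c ^ 2 * lam * φ t ^ 2) (Ioi 0) :=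
    h.2.2.1.const_mul _
  have step1 : GLF z lam (fun t => c * φ t) =
      ∫ t in Ioi (0:ℝ), (c ^ 2 * (deriv φ t) ^ 2 + c ^ 2 * ((t - z) ^ 2 * φ t ^ 2)
        + c ^ 4 * (lam / 2) * φ t ^ 4 - c ^ 2 * lam * φ t ^ 2) := by
    refine integral_congr_ae ?_
    rw [EventuallyEq, ae_restrict_iff' measurableSet_Ioi]
    refine ae_of_all _ fun t ht => ?_
    rw [deriv_const_mul c (h.2.1 t ht)]; ring
  have hab : IntegrableOn (fun t => c ^ 2 * (deriv φ t) ^ 2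
      + c ^ 2 * ((t - z) ^ 2 * φ t ^ 2)) (Ioi 0) := by exact ha.add hb
  have habc : IntegrableOn (fun t => c ^ 2 * (deriv φ t) ^ 2
      + c ^ 2 * ((t - z) ^ 2 * φ t ^ 2) + c ^ 4 * (lam / 2) * φ t ^ 4) (Ioi 0) := by
    exact hab.add hc
  rw [step1, integral_sub habc hd, integral_add hab hc, integral_add ha hb,
    integral_const_mul, integral_const_mul, integral_const_mul, integral_const_mul]
  ring

lemma glf_eq (h : MemB1 φ) (z lam : ℝ) :
    GLF z lam φ =
      ((∫ t in Ioi (0:ℝ), (deriv φ t) ^ 2) + ∫ t in Ioi (0:ℝ), (t - z) ^ 2 * φ t ^ 2)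
      + lam / 2 * (∫ t in Ioi (0:ℝ), φ t ^ 4)
      - lam * ∫ t in Ioi (0:ℝ), φ t ^ 2 := by
  have := h.glf_smul 1 z lam
  simpa using this

end MemB1

lemma cut_integrable (c : ℝ) :
    IntegrableOn (fun t => (max (c - t) 0) ^ 2) (Ioi (0:ℝ)) := by
  have hcont : Continuous (fun t : ℝ => (max (c - t) 0) ^ 2) :=
    (((continuous_const.sub continuous_id).max continuous_const).pow 2)
  rcases le_or_gt c 0 with hc | hc
  · refine (integrable_zero _ _ _).congr ?_
    rw [EventuallyEq, ae_restrict_iff' measurableSet_Ioi]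
    refine ae_of_all _ fun t ht => ?_
    have : c - t < 0 := by simp at ht; linarith
    simp [max_eq_right this.le]
  · have h1 : IntegrableOn (fun t => (max (c - t) 0) ^ 2) (Ioc (0:ℝ) c) :=
      hcont.integrableOn_Ioc
    have h2 : IntegrableOn (fun t => (max (c - t) 0) ^ 2) (Ioi c) := by
      refine (integrable_zero _ _ _).congr ?_
      rw [EventuallyEq, ae_restrict_iff' measurableSet_Ioi]
      refine ae_of_all _ fun t ht => ?_
      have : c - t < 0 := by simp at ht; linarith
      simp [max_eq_right this.le]
    have := h1.union h2
    rwa [Ioc_union_Ioi_eq_Ioi hc.le] at this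

lemma cut_integral (c : ℝ) (hc : 0 < c) :
    ∫ t in Ioi (0:ℝ), (max (c - t) 0) ^ 2 = c ^ 3 / 3 := by
  have h1 : IntegrableOn (fun t => (max (c - t) 0) ^ 2) (Ioc (0:ℝ) c) :=
    (((continuous_const.sub continuous_id).max continuous_const).pow 2).integrableOn_Ioc
  have h2 : IntegrableOn (fun t => (max (c - t) 0) ^ 2) (Ioi c) :=
    (cut_integrable c).mono_set (Ioi_subset_Ioi hc.le)
  rw [← Ioc_union_Ioi_eq_Ioi hc.le,
    setIntegral_union Ioc_disjoint_Ioi_same measurableSet_Ioi h1 h2]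
  have e2 : ∫ t in Ioi c, (max (c - t) 0) ^ 2 = 0 := by
    rw [← integral_zero ℝ ℝ (μ := volume.restrict (Ioi c))]
    refine integral_congr_ae ?_
    rw [EventuallyEq, ae_restrict_iff' measurableSet_Ioi]
    refine ae_of_all _ fun t ht => ?_
    have : c - t < 0 := by simp at ht; linarith
    simp [max_eq_right this.le]
  have e1 : ∫ t in Ioc (0:ℝ) c, (max (c - t) 0) ^ 2 = c ^ 3 / 3 := by
    have h3 : ∫ t in Ioc (0:ℝ) c, (max (c - t) 0) ^ 2 = ∫ t in Ioc (0:ℝ) c, (c - t) ^ 2 := by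
      refine setIntegral_congr_fun measurableSet_Ioc fun t ht => ?_
      have : 0 ≤ c - t := by simp at ht ⊢; linarith [ht.2]
      rw [max_eq_left this]
    rw [h3, ← intervalIntegral.integral_of_le hc.le]
    have h4 := intervalIntegral.integral_comp_sub_left (a := (0:ℝ)) (b := c) (fun x => x ^ 2) c
    simp only [sub_zero, sub_self] at h4
    rw [h4, integral_pow]
    norm_num
  rw [e1, e2, add_zero]

lemma pos4 {φ : ℝ → ℝ} (h4 : IntegrableOn (fun t => φ t ^ 4) (Ioi (0:ℝ)))
    (hN : 0 < ∫ t in Ioi (0:ℝ), φ t ^ 2) : 0 < ∫ t in Ioi (0:ℝ), φ t ^ 4 := by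
  rcases (integral_nonneg fun t => by positivity :
      (0:ℝ) ≤ ∫ t in Ioi (0:ℝ), φ t ^ 4).lt_or_eq with hlt | heq
  · exact hlt
  · exfalso
    have h0 : (fun t => φ t ^ 4) =ᵐ[volume.restrict (Ioi (0:ℝ))] 0 := by
      rw [← integral_eq_zero_iff_of_nonneg (fun t => by positivity) h4]
      exact heq.symm
    have h2 : (fun t => φ t ^ 2) =ᵐ[volume.restrict (Ioi (0:ℝ))] 0 := by
      filter_upwards [h0] with t ht
      simp only [Pi.zero_apply] at ht ⊢
      nlinarith [sq_nonneg (φ t), sq_nonneg (φ t ^ 2), ht]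
    rw [integral_congr_ae h2] at hN; simp at hN

lemma posT1 {φ : ℝ → ℝ}
    (ht1 : IntegrableOn (fun t => t * φ t ^ 2) (Ioi (0:ℝ)))
    (hN : 0 < ∫ t in Ioi (0:ℝ), φ t ^ 2) : 0 < ∫ t in Ioi (0:ℝ), t * φ t ^ 2 := by
  have hnn : ∀ᵐ t ∂(volume.restrict (Ioi (0:ℝ))), 0 ≤ t * φ t ^ 2 := by
    rw [ae_restrict_iff' measurableSet_Ioi]
    exact ae_of_all _ fun t ht => mul_nonneg (le_of_lt ht) (sq_nonneg _)
  rcases (integral_nonneg_of_ae hnn).lt_or_eq with hlt | heq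
  · exact hlt
  · exfalso
    have h0 : (fun t => t * φ t ^ 2) =ᵐ[volume.restrict (Ioi (0:ℝ))] 0 := by
      rw [← integral_eq_zero_iff_of_nonneg_ae hnn ht1]
      exact heq.symm
    have h2 : (fun t => φ t ^ 2) =ᵐ[volume.restrict (Ioi (0:ℝ))] 0 := by
      filter_upwards [h0, ae_restrict_mem measurableSet_Ioi] with t ht htmem
      simp only [Pi.zero_apply] at ht ⊢
      have : (0:ℝ) < t := htmem
      nlinarith
    rw [integral_congr_ae h2] at hN; simp at hN

set_option maxHeartbeats 2000000 in
/-- bounds on `λ‖f‖₄²` at a global minimum `(ζ, f)` of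
`(z,φ) ↦ F_{z,λ}(φ)` with `Θ₀ < λ ≤ 1`. Here `ξ₀` is the point where `μ₁`
attains its minimum `Θ₀`, `u₁` the corresponding normalized nonnegative ground
state, and `‖g‖₄² = (∫ g⁴)^{1/2}`. -/
theorem L4_norm_bounds (lam ζ : ℝ) (f : ℝ → ℝ)
    (hlam0 : Theta0 < lam) (hlam1 : lam ≤ 1)
    (hmin : IsGlobalMin lam ζ f) (hfpos : ∀ t : ℝ, 0 ≤ t → 0 ≤ f t)
    (ξ₀ : ℝ) (hξ₀ : 0 < ξ₀) (hξ₀min : mu1 ξ₀ = Theta0)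
    (u₁ : ℝ → ℝ) (hu₁ : MemB1 u₁) (hu₁pos : ∀ t : ℝ, 0 ≤ t → 0 ≤ u₁ t)
    (hu₁norm : (∫ t in Ioi (0:ℝ), (u₁ t) ^ 2) = 1)
    (hu₁gs : RQ ξ₀ u₁ = Theta0) :
    (lam - Theta0) / (∫ t in Ioi (0:ℝ), (u₁ t) ^ 4) ^ ((1:ℝ)/2) ≤
      lam * (∫ t in Ioi (0:ℝ), (f t) ^ 4) ^ ((1:ℝ)/2) ∧
    lam * (∫ t in Ioi (0:ℝ), (f t) ^ 4) ^ ((1:ℝ)/2) ≤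
      3 / 2 * ζ ^ ((1:ℝ)/2) * (lam - mu1 ζ) := by
  obtain ⟨hf, hmin2⟩ := hmin
  simp only [← Real.sqrt_eq_rpow]
  set D := ∫ t in Ioi (0:ℝ), (deriv f t) ^ 2 with hDdef
  set V := ∫ t in Ioi (0:ℝ), (t - ζ) ^ 2 * (f t) ^ 2 with hVdef
  set N := ∫ t in Ioi (0:ℝ), (f t) ^ 2 with hNdef
  set P := ∫ t in Ioi (0:ℝ), (f t) ^ 4 with hPdef
  set P₁ := ∫ t in Ioi (0:ℝ), (u₁ t) ^ 4 with hP₁def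
  set D₁ := ∫ t in Ioi (0:ℝ), (deriv u₁ t) ^ 2 with hD₁def
  set V₁ := ∫ t in Ioi (0:ℝ), (t - ξ₀) ^ 2 * (u₁ t) ^ 2 with hV₁def
  have hD0 : 0 ≤ D := integral_nonneg fun t => sq_nonneg _
  have hV0 : 0 ≤ V := integral_nonneg fun t => by positivity
  have hN0 : 0 ≤ N := integral_nonneg fun t => sq_nonneg _
  have hP0 : 0 ≤ P := integral_nonneg fun t => by positivity
  have hP₁0 : 0 ≤ P₁ := integral_nonneg fun t => by positivity
  have hD₁0 : 0 ≤ D₁ := integral_nonneg fun t => sq_nonneg _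
  have hV₁0 : 0 ≤ V₁ := integral_nonneg fun t => by positivity
  -- ground state identity
  have hsplit₁ : (∫ t in Ioi (0:ℝ), ((deriv u₁ t) ^ 2 + (t - ξ₀) ^ 2 * (u₁ t) ^ 2))
      = D₁ + V₁ := by
    rw [integral_add hu₁.2.2.2.1 (hu₁.intV ξ₀), ← hD₁def, ← hV₁def]
  have hTheta : D₁ + V₁ = Theta0 := by
    rw [← hu₁gs]
    simp only [RQ]
    rw [hu₁norm, div_one, hsplit₁]
  have hθ0 : 0 ≤ Theta0 := by rw [← hTheta]; linarith
  have hlam_pos : 0 < lam := lt_of_le_of_lt hθ0 hlam0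
  have hlamT : 0 < lam - Theta0 := sub_pos.2 hlam0
  have hP₁pos : 0 < P₁ := by
    refine pos4 hu₁.int4 ?_
    rw [hu₁norm]; norm_num
  -- testing against c • u₁
  have hGc : ∀ c : ℝ, GLF ζ lam f ≤ c ^ 2 * Theta0 + c ^ 4 * (lam / 2) * P₁ - c ^ 2 * lam := by
    intro c
    have h1 := hmin2 ξ₀ (fun t => c * u₁ t) (hu₁.smul c)
    rw [hu₁.glf_smul c ξ₀ lam, hu₁norm] at h1
    rw [← hD₁def, ← hV₁def, ← hP₁def, hTheta] at h1
    calc GLF ζ lam f ≤ c ^ 2 * Theta0 + c ^ 4 * (lam / 2) * P₁ - c ^ 2 * lam * 1 := h1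
      _ = _ := by ring
  have hkey : GLF ζ lam f ≤ -(lam - Theta0) ^ 2 / (2 * lam * P₁) := by
    have hx : (0:ℝ) < (lam - Theta0) / (lam * P₁) := by positivity
    set c := Real.sqrt ((lam - Theta0) / (lam * P₁)) with hcdef
    have hc2 : c ^ 2 = (lam - Theta0) / (lam * P₁) := Real.sq_sqrt hx.le
    have hc4 : c ^ 4 = ((lam - Theta0) / (lam * P₁)) ^ 2 := by
      rw [show c ^ 4 = (c ^ 2) ^ 2 by ring, hc2]
    have h1 := hGc c
    rw [hc2, hc4] at h1
    calc GLF ζ lam f ≤ _ := h1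
      _ = -(lam - Theta0) ^ 2 / (2 * lam * P₁) := by
        field_simp
        ring
  -- decomposition of GLF at f
  have hglf : GLF ζ lam f = D + V + lam / 2 * P - lam * N := by
    have := hf.glf_eq ζ lam
    rw [← hDdef, ← hVdef, ← hPdef, ← hNdef] at this
    linarith [this]
  have hfneg : GLF ζ lam f < 0 := by
    refine lt_of_le_of_lt hkey ?_
    have h1 : 0 < (lam - Theta0) ^ 2 / (2 * lam * P₁) :=
      div_pos (pow_pos hlamT 2) (by positivity)
    rw [neg_div]
    exact neg_lt_zero.mpr h1
  have hNpos : 0 < N := by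
    have h5 : D + V + lam / 2 * P - lam * N < 0 := by rw [← hglf]; exact hfneg
    by_contra hc
    push_neg at hc
    have : lam * N ≤ lam * 0 := mul_le_mul_of_nonneg_left hc hlam_pos.le
    nlinarith
  have hPpos : 0 < P := pos4 hf.int4 hNpos
  -- scaling variation ⇒ Euler-Lagrange style identity
  have hscale : ∀ x : ℝ, 0 ≤ x →
      D + V + lam / 2 * P - lam * N ≤ x * (D + V) + x ^ 2 * (lam / 2) * P - x * lam * N := by
    intro x hx
    have h1 := hmin2 ζ (fun t => Real.sqrt x * f t) (hf.smul _)
    rw [hf.glf_smul _ ζ lam] at h1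
    rw [← hDdef, ← hVdef, ← hPdef, ← hNdef] at h1
    rw [hglf] at h1
    have hs2 : Real.sqrt x ^ 2 = x := Real.sq_sqrt hx
    have hs4 : Real.sqrt x ^ 4 = x ^ 2 := by
      rw [show Real.sqrt x ^ 4 = (Real.sqrt x ^ 2) ^ 2 by ring, hs2]
    rw [hs2, hs4] at h1
    calc D + V + lam / 2 * P - lam * N ≤ _ := h1
      _ = x * (D + V) + x ^ 2 * (lam / 2) * P - x * lam * N := by ring
  have hB0 : 0 ≤ lam / 2 * P := by positivity
  set A : ℝ := D + V - lam * N with hAdef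
  set B : ℝ := lam / 2 * P with hBdef
  have hscale' : ∀ x : ℝ, 0 ≤ x → A + B ≤ x * A + x ^ 2 * B := by
    intro x hx
    have h1 := hscale x hx
    calc A + B = D + V + lam / 2 * P - lam * N := by rw [hAdef, hBdef]; ring
      _ ≤ x * (D + V) + x ^ 2 * (lam / 2) * P - x * lam * N := h1
      _ = x * A + x ^ 2 * B := by rw [hAdef, hBdef]; ring
  have hid : A + 2 * B = 0 := by
    have hge : 0 ≤ A + 2 * B := by
      rw [← neg_nonpos]
      refine le_of_forall_pos_le_add (fun δ hδ => ?_)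
      set ε : ℝ := δ / (B + 1) with hεdef
      have hε : 0 < ε := by rw [hεdef]; positivity
      have h1 := hscale' (1 + ε) (by linarith)
      have h2 : 0 ≤ ε * (A + 2 * B + ε * B) := by nlinarith [h1]
      have h3 : 0 ≤ A + 2 * B + ε * B := by
        by_contra hc
        push_neg at hc
        have := mul_neg_of_pos_of_neg hε hc
        linarith
      have h4 : ε * B ≤ δ := by
        rw [hεdef]
        rw [div_mul_eq_mul_div, div_le_iff₀ (by linarith : (0:ℝ) < B + 1)]
        nlinarith
      linarith
    have hle : A + 2 * B ≤ 0 := by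
      refine le_of_forall_pos_le_add (fun δ hδ => ?_)
      set ε : ℝ := min (δ / (B + 1)) (1/2) with hεdef
      have hε : 0 < ε := by
        rw [hεdef]
        exact lt_min (by positivity) (by norm_num)
      have hε1 : ε ≤ 1/2 := min_le_right _ _
      have h1 := hscale' (1 - ε) (by linarith)
      have h2 : 0 ≤ ε * (- A - 2 * B + ε * B) := by nlinarith
      have h3 : 0 ≤ - A - 2 * B + ε * B := by
        by_contra hc
        push_neg at hc
        have := mul_neg_of_pos_of_neg hε hc
        linarith
      have h4 : ε * B ≤ δ := by
        have h5 : ε ≤ δ / (B + 1) := min_le_left _ _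
        have h6 : ε * B ≤ δ / (B + 1) * B := mul_le_mul_of_nonneg_right h5 hB0
        have h7 : δ / (B + 1) * B ≤ δ := by
          rw [div_mul_eq_mul_div, div_le_iff₀ (by linarith : (0:ℝ) < B + 1)]
          nlinarith
        linarith
      linarith
    linarith
  have hidP : D + V = lam * N - lam * P := by
    rw [hAdef, hBdef] at hid
    linarith
  have hGLFval : GLF ζ lam f = -(lam / 2 * P) := by
    rw [hglf]
    linarith
  -- lower bound
  have hlow : (lam - Theta0) / Real.sqrt P₁ ≤ lam * Real.sqrt P := by
    have h1 : (lam - Theta0) ^ 2 / (2 * lam * P₁) ≤ lam / 2 * P := by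
      rw [hGLFval] at hkey
      have : -(lam / 2 * P) ≤ -(lam - Theta0) ^ 2 / (2 * lam * P₁) := hkey
      rw [neg_div] at this
      linarith
    have h2 : (lam - Theta0) ^ 2 ≤ lam ^ 2 * P * P₁ := by
      rw [div_le_iff₀ (by positivity : (0:ℝ) < 2 * lam * P₁)] at h1
      nlinarith
    have ha0 : 0 ≤ (lam - Theta0) / Real.sqrt P₁ := div_nonneg hlamT.le (Real.sqrt_nonneg _)
    have hb0 : 0 ≤ lam * Real.sqrt P := mul_nonneg hlam_pos.le (Real.sqrt_nonneg _)
    have hsq : ((lam - Theta0) / Real.sqrt P₁) ^ 2 ≤ (lam * Real.sqrt P) ^ 2 := by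
      rw [div_pow, mul_pow, Real.sq_sqrt hP₁0, Real.sq_sqrt hP0,
        div_le_iff₀ hP₁pos]
      nlinarith
    nlinarith [hsq, ha0, hb0]
  -- first moment identity
  set T1 := ∫ t in Ioi (0:ℝ), t * (f t) ^ 2 with hT1def
  set T2 := ∫ t in Ioi (0:ℝ), (t * f t) ^ 2 with hT2def
  have hVz : ∀ z : ℝ, (∫ t in Ioi (0:ℝ), (t - z) ^ 2 * (f t) ^ 2)
      = T2 - 2 * z * T1 + z ^ 2 * N := by
    intro z
    have hsub : IntegrableOn (fun t => (t * f t) ^ 2 - 2 * z * (t * (f t) ^ 2)) (Ioi 0) := by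
      exact hf.2.2.2.2.sub ((hf.int_t_sq_s12).const_mul (2 * z))
    calc (∫ t in Ioi (0:ℝ), (t - z) ^ 2 * (f t) ^ 2)
        = ∫ t in Ioi (0:ℝ), ((t * f t) ^ 2 - 2 * z * (t * (f t) ^ 2) + z ^ 2 * (f t) ^ 2) :=
          integral_congr_ae (ae_of_all _ fun t => by ring)
      _ = T2 - 2 * z * T1 + z ^ 2 * N := by
          rw [integral_add hsub (hf.2.2.1.const_mul (z ^ 2)),
            integral_sub hf.2.2.2.2 ((hf.int_t_sq_s12).const_mul (2 * z)),
            integral_const_mul, integral_const_mul, ← hT2def, ← hT1def, ← hNdef]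
  have hVmin : ∀ z : ℝ, T2 - 2 * ζ * T1 + ζ ^ 2 * N ≤ T2 - 2 * z * T1 + z ^ 2 * N := by
    intro z
    have h1 := hmin2 z f hf
    rw [hglf, hf.glf_eq z lam] at h1
    rw [← hDdef, ← hPdef, ← hNdef, hVz z] at h1
    have h2 : V = T2 - 2 * ζ * T1 + ζ ^ 2 * N := by rw [hVdef]; exact hVz ζ
    rw [h2] at h1
    linarith
  have hT1 : T1 = ζ * N := by
    have h1 := hVmin (T1 / N)
    have h2 : T2 - 2 * (T1 / N) * T1 + (T1 / N) ^ 2 * N = T2 - T1 ^ 2 / N := by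
      field_simp
      ring
    rw [h2] at h1
    have h3 : N * (ζ - T1 / N) ^ 2 ≤ 0 := by
      have e : N * (ζ - T1 / N) ^ 2 = ζ ^ 2 * N - 2 * ζ * T1 + T1 ^ 2 / N := by
        field_simp
        ring
      rw [e]
      linarith
    have h4 : (ζ - T1 / N) ^ 2 ≤ 0 := by
      by_contra hc
      push_neg at hc
      nlinarith
    have h5 : ζ - T1 / N = 0 := by
      have := sq_nonneg (ζ - T1 / N)
      have h6 : (ζ - T1 / N) ^ 2 = 0 := le_antisymm h4 this
      exact pow_eq_zero_iff (n := 2) (by norm_num) |>.mp h6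
    have h7 : ζ = T1 / N := by linarith
    rw [h7]
    field_simp
  have hT1pos : 0 < T1 := posT1 hf.int_t_sq_s12 hNpos
  have hζpos : 0 < ζ := by
    by_contra hc
    push_neg at hc
    have : ζ * N ≤ 0 * N := mul_le_mul_of_nonneg_right hc hN0
    rw [zero_mul] at this
    rw [hT1] at hT1pos
    linarith
  -- moment Cauchy-Schwarz inequality
  have hmom : 2 * ζ * N ≤ 3 * ζ * Real.sqrt ζ * Real.sqrt P := by
    have hsplit : (∫ t in Ioi (0:ℝ), (3 * ζ * (f t) ^ 2 - t * (f t) ^ 2))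
        = 3 * ζ * N - T1 := by
      rw [integral_sub (hf.2.2.1.const_mul _) hf.int_t_sq_s12, integral_const_mul,
        ← hNdef, ← hT1def]
    have hgaesm : AEStronglyMeasurable (fun t : ℝ => max (3 * ζ - t) 0)
        (volume.restrict (Ioi (0:ℝ))) :=
      ((continuous_const.sub continuous_id).max continuous_const).aestronglyMeasurable
    have hf2aesm : AEStronglyMeasurable (fun t : ℝ => (f t) ^ 2)
        (volume.restrict (Ioi (0:ℝ))) := hf.aesm.pow 2
    have hf4' : IntegrableOn (fun t => ((f t) ^ 2) ^ 2) (Ioi (0:ℝ)) :=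
      hf.int4.congr (ae_of_all _ fun t => by ring)
    have hprod : IntegrableOn (fun t => max (3 * ζ - t) 0 * (f t) ^ 2) (Ioi (0:ℝ)) :=
      integrable_mul_of_sq hgaesm hf2aesm (cut_integrable _) hf4'
    have hle1 : (∫ t in Ioi (0:ℝ), (3 * ζ * (f t) ^ 2 - t * (f t) ^ 2))
        ≤ ∫ t in Ioi (0:ℝ), max (3 * ζ - t) 0 * (f t) ^ 2 := by
      refine integral_mono ?_ hprod ?_
      · exact (hf.2.2.1.const_mul _).sub hf.int_t_sq_s12
      · intro t
        have h1 : 3 * ζ - t ≤ max (3 * ζ - t) 0 := le_max_left _ _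
        have h2 := mul_le_mul_of_nonneg_right h1 (sq_nonneg (f t))
        calc 3 * ζ * (f t) ^ 2 - t * (f t) ^ 2 = (3 * ζ - t) * (f t) ^ 2 := by ring
          _ ≤ max (3 * ζ - t) 0 * (f t) ^ 2 := h2
    have hcs := integral_cs hgaesm hf2aesm (cut_integrable (3 * ζ)) hf4'
    have hg2val : (∫ t in Ioi (0:ℝ), (max (3 * ζ - t) 0) ^ 2) = (3 * ζ) ^ 3 / 3 :=
      cut_integral _ (by positivity)
    have hh2val : (∫ t in Ioi (0:ℝ), ((f t) ^ 2) ^ 2) = P := by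
      rw [hPdef]
      exact integral_congr_ae (ae_of_all _ fun t => by ring)
    rw [hg2val, hh2val] at hcs
    have hsqrtval : Real.sqrt ((3 * ζ) ^ 3 / 3) = 3 * ζ * Real.sqrt ζ := by
      have e : (3 * ζ) ^ 3 / 3 = (3 * ζ * Real.sqrt ζ) ^ 2 := by
        rw [mul_pow, mul_pow, Real.sq_sqrt hζpos.le]
        ring
      rw [e, Real.sqrt_sq (by positivity)]
    rw [hsqrtval] at hcs
    calc 2 * ζ * N = 3 * ζ * N - T1 := by rw [hT1]; ring
      _ = ∫ t in Ioi (0:ℝ), (3 * ζ * (f t) ^ 2 - t * (f t) ^ 2) := hsplit.symm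
      _ ≤ ∫ t in Ioi (0:ℝ), max (3 * ζ - t) 0 * (f t) ^ 2 := hle1
      _ ≤ 3 * ζ * Real.sqrt ζ * Real.sqrt P := hcs
  have hNle : N ≤ 3 / 2 * Real.sqrt ζ * Real.sqrt P := by
    have h1 : ζ * (2 * N) ≤ ζ * (3 * Real.sqrt ζ * Real.sqrt P) := by nlinarith
    have h2 := le_of_mul_le_mul_left h1 hζpos
    linarith
  -- mu1 ζ bound
  have hmuleq : mu1 ζ ≤ (D + V) / N := by
    have hbdd : BddBelow {r | ∃ φ, MemB1 φ ∧ (0 < ∫ t in Ioi (0:ℝ), (φ t) ^ 2) ∧ r = RQ ζ φ} := by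
      refine ⟨0, fun r hr => ?_⟩
      obtain ⟨ψ, hψ, hψpos, rfl⟩ := hr
      exact div_nonneg (integral_nonneg fun t => by positivity) hψpos.le
    have hmem : (D + V) / N ∈
        {r | ∃ φ, MemB1 φ ∧ (0 < ∫ t in Ioi (0:ℝ), (φ t) ^ 2) ∧ r = RQ ζ φ} := by
      refine ⟨f, hf, hNpos, ?_⟩
      simp only [RQ]
      rw [integral_add hf.2.2.2.1 (hf.intV ζ), ← hDdef, ← hVdef, ← hNdef]
    exact csInf_le hbdd hmem
  have hmuN : mu1 ζ * N ≤ D + V := by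
    rw [le_div_iff₀ hNpos] at hmuleq
    exact hmuleq
  have hlamP : lam * P ≤ lam * N - mu1 ζ * N := by linarith
  have hmu_lt : 0 < lam - mu1 ζ := by
    have h1 : 0 < lam * P := mul_pos hlam_pos hPpos
    by_contra hc
    push_neg at hc
    have h2 : lam ≤ mu1 ζ := by linarith
    have h3 : lam * N ≤ mu1 ζ * N := mul_le_mul_of_nonneg_right h2 hN0
    linarith
  -- upper bound
  have hup : lam * Real.sqrt P ≤ 3 / 2 * Real.sqrt ζ * (lam - mu1 ζ) := by
    have hsP : 0 < Real.sqrt P := Real.sqrt_pos.2 hPpos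
    have h1 : lam * Real.sqrt P * Real.sqrt P ≤
        3 / 2 * Real.sqrt ζ * (lam - mu1 ζ) * Real.sqrt P := by
      have e : lam * Real.sqrt P * Real.sqrt P = lam * P := by
        rw [mul_assoc, Real.mul_self_sqrt hP0]
      rw [e]
      calc lam * P ≤ lam * N - mu1 ζ * N := hlamP
        _ = (lam - mu1 ζ) * N := by ring
        _ ≤ (lam - mu1 ζ) * (3 / 2 * Real.sqrt ζ * Real.sqrt P) :=
            mul_le_mul_of_nonneg_left hNle hmu_lt.le
        _ = 3 / 2 * Real.sqrt ζ * (lam - mu1 ζ) * Real.sqrt P := by ring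
    exact le_of_mul_le_mul_right h1 hsP
  exact ⟨hlow, hup⟩
end
end
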